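/- arXiv:1001.0432 — 4 statements merged into one kernel-verified Lean document; each statement's English description precedes it below -/
import Mathlib

section
/- Let G be a finite subgroup of GL_n(ℂ), S its set of reflections, and c : S → ℂ conjugation-invariant. For every a ∈ ℂ^n and every linear form x ∈ (ℂ^n)*, the commutator of the Dunkl operator D_a with the operator M_x of multiplication by x satisfies, as endomorphisms of ℂ(x_1,…,x_n): [D_a, M_x] = x(a)·Id − Σ_{s∈S} c_s · α_s(a) · x(α_s^∨) · ρ(s), where ρ(s) denotes the action of s on rational functions. Moreover, for every g ∈ G one has ρ(g) ∘ D_a ∘ ρ(g)^{-1} = D_{ga}. -/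
open MvPolynomial

noncomputable section

/-- The matrix underlying an element of a subgroup of `GL_n(ℂ)`. -/
def matOf {n : ℕ} {G : Subgroup (Matrix.GeneralLinearGroup (Fin n) ℂ)} (g : G) :
    Matrix (Fin n) (Fin n) ℂ :=
  ((g : Matrix.GeneralLinearGroup (Fin n) ℂ) : Matrix (Fin n) (Fin n) ℂ)

/-- The linear polynomial `Σᵢ aᵢ xᵢ` with coefficient vector `a`. -/
def linForm {n : ℕ} (a : Fin n → ℂ) : MvPolynomial (Fin n) ℂ :=
  ∑ i, MvPolynomial.C (a i) * MvPolynomial.X i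

/-- The Dunkl operator `D_a` on the field `K = ℂ(x₁,…,xₙ)`:
`D_a f = ∂_a f − Σ_{s ∈ S} (2 c_s α_s(a)/(1 − λ_s)) · (f − s·f)/α_s`. -/
def dunklOp (n : ℕ) (K : Type) [Field K] [Algebra ℂ K]
    [Algebra (MvPolynomial (Fin n) ℂ) K] [IsScalarTower ℂ (MvPolynomial (Fin n) ℂ) K]
    {G : Subgroup (Matrix.GeneralLinearGroup (Fin n) ℂ)}
    (S : Finset G) (c lam : G → ℂ) (α : G → Fin n → ℂ)
    (ρ : G →* (K ≃ₐ[ℂ] K)) (pd : Fin n → Derivation ℂ K K)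
    (a : Fin n → ℂ) : K →ₗ[ℂ] K :=
  (∑ i, a i • (pd i).toLinearMap)
    - ∑ s ∈ S, (2 * c s * (∑ i, α s i * a i) / (1 - lam s)) •
        ((LinearMap.mulLeft ℂ
            ((algebraMap (MvPolynomial (Fin n) ℂ) K (linForm (α s)))⁻¹)).comp
          (LinearMap.id - (ρ s).toLinearMap))

/-- Multiplication by the linear form with coefficient vector `ξ`,
as a `ℂ`-linear endomorphism of `K`. -/
def mulLinForm (n : ℕ) (K : Type) [Field K] [Algebra ℂ K]
    [Algebra (MvPolynomial (Fin n) ℂ) K] [IsScalarTower ℂ (MvPolynomial (Fin n) ℂ) K]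
    (ξ : Fin n → ℂ) : K →ₗ[ℂ] K :=
  LinearMap.mulLeft ℂ (algebraMap (MvPolynomial (Fin n) ℂ) K (linForm ξ))

/-! ### Auxiliary lemmas -/

section MatOf

variable {n : ℕ} {G : Subgroup (Matrix.GeneralLinearGroup (Fin n) ℂ)}

lemma matOf_mul (g h : G) : matOf (g * h) = matOf g * matOf h := rfl

lemma matOf_one : matOf (1 : G) = 1 := rfl

lemma matOf_mul_inv (g : G) : matOf g * matOf g⁻¹ = 1 := by
  rw [← matOf_mul, mul_inv_cancel, matOf_one]

lemma matOf_inv_mul (g : G) : matOf g⁻¹ * matOf g = 1 := by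
  rw [← matOf_mul, inv_mul_cancel, matOf_one]

lemma isUnit_det_matOf (g : G) : IsUnit (matOf g).det :=
  (Matrix.isUnit_iff_isUnit_det _).mp ⟨(g : Matrix.GeneralLinearGroup (Fin n) ℂ), rfl⟩

end MatOf

section LinFormPoly

variable {n : ℕ}

lemma pderiv_linForm (a : Fin n → ℂ) (i : Fin n) :
    MvPolynomial.pderiv i (linForm a) = MvPolynomial.C (a i) := by
  rw [linForm, map_sum]
  rw [Finset.sum_eq_single i]
  · simp
  · intro j _ hj
    simp [hj]
  · simp

lemma linForm_sub (a b : Fin n → ℂ) : linForm (a - b) = linForm a - linForm b := by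
  simp [linForm, sub_mul, Finset.sum_sub_distrib]

lemma linForm_smul (μ : ℂ) (a : Fin n → ℂ) :
    linForm (μ • a) = MvPolynomial.C μ * linForm a := by
  simp [linForm, Finset.mul_sum, mul_assoc]

lemma linForm_ne_zero {a : Fin n → ℂ} (ha : a ≠ 0) : linForm a ≠ 0 := by
  intro h
  apply ha
  funext j
  have := congrArg (MvPolynomial.eval (Pi.single j (1 : ℂ))) h
  simp [linForm, Pi.single_apply] at this
  simpa using this

lemma dot_eq (v w : Fin n → ℂ) : ∑ i, v i * w i = dotProduct v w := rfl

end LinFormPoly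

section RankOne

lemma rank_one_prop {n : ℕ} {A : Matrix (Fin n) (Fin n) ℂ} (hA : A.rank = 1)
    {u w : Fin n → ℂ} (hu : u ≠ 0)
    (hu' : u ∈ LinearMap.range (A.transpose.mulVecLin)) (hw' : w ∈ LinearMap.range (A.transpose.mulVecLin)) :
    ∃ μ : ℂ, w = μ • u := by
  have hrk : Module.finrank ℂ (LinearMap.range (A.transpose.mulVecLin)) = 1 := by
    have h2 := A.rank_transpose
    rw [Matrix.rank] at h2
    rw [h2, hA]
  have hne : (⟨u, hu'⟩ : LinearMap.range (A.transpose.mulVecLin)) ≠ 0 := fun h =>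
    hu (congrArg Subtype.val h)
  obtain ⟨c, hc⟩ := (finrank_eq_one_iff_of_nonzero' _ hne).mp hrk ⟨w, hw'⟩
  exact ⟨c, (congrArg Subtype.val hc).symm⟩

lemma rank_neg_one_mul {n : ℕ} (B : Matrix (Fin n) (Fin n) ℂ) :
    ((-1 : Matrix (Fin n) (Fin n) ℂ) * B).rank = B.rank := by
  apply Matrix.rank_mul_eq_right_of_isUnit_det
  simp [Matrix.det_neg]

variable {n : ℕ} {G : Subgroup (Matrix.GeneralLinearGroup (Fin n) ℂ)}

lemma reflection_rank_inv {t : G}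
    (hrank : Matrix.rank ((1 : Matrix (Fin n) (Fin n) ℂ) - matOf t) = 1) :
    ((1 : Matrix (Fin n) (Fin n) ℂ) - matOf t⁻¹).rank = 1 := by
  have hfac : (1 : Matrix (Fin n) (Fin n) ℂ) - matOf t⁻¹
      = matOf t⁻¹ * ((-1 : Matrix (Fin n) (Fin n) ℂ) *
        ((1 : Matrix (Fin n) (Fin n) ℂ) - matOf t)) := by
    rw [neg_one_mul, mul_neg, mul_sub, mul_one, matOf_inv_mul, neg_sub]
  rw [hfac, Matrix.rank_mul_eq_right_of_isUnit_det _ _ (isUnit_det_matOf t⁻¹),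
    rank_neg_one_mul, hrank]

lemma mem_range_of_eigen {t : G} {v : Fin n → ℂ} {l : ℂ} (hl : l ≠ 1)
    (hv : Matrix.vecMul v (matOf t⁻¹) = l • v) :
    v ∈ LinearMap.range (((1 : Matrix (Fin n) (Fin n) ℂ) - matOf t⁻¹).transpose.mulVecLin) := by
  set A : Matrix (Fin n) (Fin n) ℂ := 1 - matOf t⁻¹ with hAdef
  have h1 : Matrix.vecMul v A = (1 - l) • v := by
    rw [hAdef, Matrix.vecMul_sub, Matrix.vecMul_one, hv, sub_smul, one_smul]
  have h2 : v = (1 - l)⁻¹ • Matrix.vecMul v A := by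
    rw [h1, smul_smul, inv_mul_cancel₀ (sub_ne_zero_of_ne (Ne.symm hl)), one_smul]
  rw [h2]
  exact Submodule.smul_mem _ _ ⟨v, Matrix.mulVec_transpose A v⟩

/-- Every vector in the row space of `1 - t⁻¹` is a multiple of `α_t`. -/
lemma reflection_span {t : G}
    (hrank : Matrix.rank ((1 : Matrix (Fin n) (Fin n) ℂ) - matOf t) = 1)
    {αt : Fin n → ℂ} {lt : ℂ} (hαt : αt ≠ 0) (hlt : lt ≠ 1)
    (ht : Matrix.vecMul αt (matOf t⁻¹) = lt • αt)
    {w : Fin n → ℂ}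
    (hw : w ∈ LinearMap.range (((1 : Matrix (Fin n) (Fin n) ℂ) - matOf t⁻¹).transpose.mulVecLin)) :
    ∃ μ : ℂ, w = μ • αt :=
  rank_one_prop (reflection_rank_inv hrank) hαt (mem_range_of_eigen hlt ht) hw

lemma reflection_eigen {t : G}
    (hrank : Matrix.rank ((1 : Matrix (Fin n) (Fin n) ℂ) - matOf t) = 1)
    {αt : Fin n → ℂ} {lt : ℂ} (hαt : αt ≠ 0) (hlt : lt ≠ 1)
    (ht : Matrix.vecMul αt (matOf t⁻¹) = lt • αt)
    {w : Fin n → ℂ} {l' : ℂ} (hl' : l' ≠ 1)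
    (hw : Matrix.vecMul w (matOf t⁻¹) = l' • w) :
    ∃ μ : ℂ, w = μ • αt :=
  reflection_span hrank hαt hlt ht (mem_range_of_eigen hl' hw)

end RankOne

section Ops

variable {K : Type} [Field K] [Algebra ℂ K]

lemma lsum_comp {I : Type*} (s : Finset I) (f : I → (K →ₗ[ℂ] K)) (g : K →ₗ[ℂ] K) :
    (∑ i ∈ s, f i).comp g = ∑ i ∈ s, (f i).comp g := by
  ext x; simp

lemma lcomp_sum {I : Type*} (s : Finset I) (f : I → (K →ₗ[ℂ] K)) (g : K →ₗ[ℂ] K) :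
    g.comp (∑ i ∈ s, f i) = ∑ i ∈ s, g.comp (f i) := by
  ext x; simp

lemma comm_mulLeft (D : K →ₗ[ℂ] K) (hD : ∀ f g : K, D (f * g) = f * D g + g * D f) (u : K) :
    D.comp (LinearMap.mulLeft ℂ u) - (LinearMap.mulLeft ℂ u).comp D
      = LinearMap.mulLeft ℂ (D u) := by
  ext f
  simp only [LinearMap.sub_apply, LinearMap.comp_apply, LinearMap.mulLeft_apply, hD]
  ring

lemma refl_comm (e : K ≃ₐ[ℂ] K) (v u : K) :
    ((LinearMap.mulLeft ℂ v).comp (LinearMap.id - e.toLinearMap)).comp (LinearMap.mulLeft ℂ u)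
      - (LinearMap.mulLeft ℂ u).comp
          ((LinearMap.mulLeft ℂ v).comp (LinearMap.id - e.toLinearMap))
    = (LinearMap.mulLeft ℂ (v * (u - e u))).comp e.toLinearMap := by
  ext f
  simp only [LinearMap.sub_apply, LinearMap.comp_apply, LinearMap.mulLeft_apply,
    LinearMap.id_apply, AlgEquiv.toLinearMap_apply, _root_.map_mul]
  ring

lemma mulLeft_smul_one (μ : ℂ) :
    LinearMap.mulLeft ℂ (μ • (1 : K)) = μ • (LinearMap.id : K →ₗ[ℂ] K) := by
  ext f
  simp [smul_mul_assoc]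

lemma mulLeft_smul (μ : ℂ) (v : K) :
    LinearMap.mulLeft ℂ (μ • v) = μ • LinearMap.mulLeft ℂ v := by
  ext f
  simp [smul_mul_assoc]

end Ops

section KLevel

variable {n : ℕ} {K : Type} [Field K] [Algebra ℂ K]
    [Algebra (MvPolynomial (Fin n) ℂ) K] [IsScalarTower ℂ (MvPolynomial (Fin n) ℂ) K]

local notation "φ" => algebraMap (MvPolynomial (Fin n) ℂ) K

lemma phi_C (a : ℂ) : φ (MvPolynomial.C a) = a • (1 : K) := by
  rw [show (MvPolynomial.C a : MvPolynomial (Fin n) ℂ) = algebraMap ℂ _ a from rfl,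
    ← IsScalarTower.algebraMap_apply, Algebra.algebraMap_eq_smul_one]

lemma phi_linForm (ξ : Fin n → ℂ) : φ (linForm ξ) = ∑ i, ξ i • φ (MvPolynomial.X i) := by
  rw [linForm, map_sum]
  refine Finset.sum_congr rfl fun i _ => ?_
  rw [_root_.map_mul, phi_C, smul_mul_assoc, one_mul]

variable {G : Subgroup (Matrix.GeneralLinearGroup (Fin n) ℂ)}
  (ρ : G →* (K ≃ₐ[ℂ] K))
  (hρ : ∀ (g : G) (i : Fin n),
      ρ g (algebraMap (MvPolynomial (Fin n) ℂ) K (MvPolynomial.X i)) =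
        algebraMap (MvPolynomial (Fin n) ℂ) K
          (∑ j, MvPolynomial.C (matOf g⁻¹ i j) * MvPolynomial.X j))

include hρ in
lemma rho_linForm (g : G) (ξ : Fin n → ℂ) :
    ρ g (φ (linForm ξ)) = φ (linForm (Matrix.vecMul ξ (matOf g⁻¹))) := by
  rw [phi_linForm, map_sum]
  have key : ∀ i, ρ g (ξ i • φ (MvPolynomial.X i))
      = ∑ j, (ξ i * matOf g⁻¹ i j) • φ (MvPolynomial.X j) := by
    intro i
    rw [_root_.map_smul, hρ g i, show (∑ j, MvPolynomial.C (matOf g⁻¹ i j) * MvPolynomial.X j)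
        = linForm (matOf g⁻¹ i) from rfl, phi_linForm, Finset.smul_sum]
    exact Finset.sum_congr rfl fun j _ => by rw [smul_smul]
  rw [Finset.sum_congr rfl fun i _ => key i, Finset.sum_comm, phi_linForm]
  refine Finset.sum_congr rfl fun j _ => ?_
  rw [Matrix.vecMul, dotProduct, Finset.sum_smul]

end KLevel

section KLevel2

variable {n : ℕ} {K : Type} [Field K] [Algebra ℂ K]
    [Algebra (MvPolynomial (Fin n) ℂ) K] [IsScalarTower ℂ (MvPolynomial (Fin n) ℂ) K]
    [IsFractionRing (MvPolynomial (Fin n) ℂ) K]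

local notation "φ" => algebraMap (MvPolynomial (Fin n) ℂ) K

lemma leibniz_ext (D : K →ₗ[ℂ] K)
    (hD : ∀ f g : K, D (f * g) = f * D g + g * D f)
    (h0 : ∀ i, D (φ (MvPolynomial.X i)) = 0) : D = 0 := by
  have hone : D 1 = 0 := by
    have := hD 1 1
    rw [one_mul, one_mul] at this
    linear_combination (norm := module) -this
  have hpoly : ∀ p : MvPolynomial (Fin n) ℂ, D (φ p) = 0 := by
    intro p
    induction p using MvPolynomial.induction_on with
    | C a =>
      have : φ (MvPolynomial.C a) = a • (1 : K) := phi_C a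
      rw [this, _root_.map_smul, hone, smul_zero]
    | add p q hp hq => rw [map_add, map_add, hp, hq, add_zero]
    | mul_X p i hp => rw [_root_.map_mul, hD, hp, h0, mul_zero, mul_zero, add_zero]
  ext z
  obtain ⟨p, q, hq, hz⟩ := IsFractionRing.div_surjective (A := MvPolynomial (Fin n) ℂ) z
  have hq0 : φ q ≠ 0 :=
    IsFractionRing.to_map_ne_zero_of_mem_nonZeroDivisors hq
  have hzq : z * φ q = φ p := by
    rw [← hz, div_mul_cancel₀ _ hq0]
  have hD2 := hD z (φ q)
  rw [hzq, hpoly p, hpoly q, mul_zero, zero_add] at hD2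
  rcases mul_eq_zero.mp hD2.symm with h | h
  · exact absurd h hq0
  · simpa using h

end KLevel2

section PLemmas

variable {n : ℕ} {K : Type} [Field K] [Algebra ℂ K]
    [Algebra (MvPolynomial (Fin n) ℂ) K] [IsScalarTower ℂ (MvPolynomial (Fin n) ℂ) K]

local notation "φ" => algebraMap (MvPolynomial (Fin n) ℂ) K

lemma phi_C' (a : ℂ) : φ (MvPolynomial.C a) = a • (1 : K) := by
  rw [show (MvPolynomial.C a : MvPolynomial (Fin n) ℂ) = algebraMap ℂ _ a from rfl,
    ← IsScalarTower.algebraMap_apply, Algebra.algebraMap_eq_smul_one]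

set_option linter.unusedSectionVars false in
lemma P_leibniz (pd : Fin n → Derivation ℂ K K) (a : Fin n → ℂ) (f g : K) :
    (∑ i, a i • (pd i).toLinearMap) (f * g)
      = f * (∑ i, a i • (pd i).toLinearMap) g + g * (∑ i, a i • (pd i).toLinearMap) f := by
  simp only [LinearMap.sum_apply, LinearMap.smul_apply, Derivation.coeFn_coe,
    Derivation.leibniz, smul_eq_mul, Finset.mul_sum, smul_add]
  rw [← Finset.sum_add_distrib]
  refine Finset.sum_congr rfl fun i _ => ?_
  rw [mul_smul_comm, mul_smul_comm]

lemma P_linForm (pd : Fin n → Derivation ℂ K K)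
    (hpd : ∀ (i : Fin n) (q : MvPolynomial (Fin n) ℂ),
      pd i (φ q) = φ (MvPolynomial.pderiv i q))
    (a b : Fin n → ℂ) :
    (∑ i, a i • (pd i).toLinearMap) (φ (linForm b)) = (∑ i, b i * a i) • (1 : K) := by
  simp only [LinearMap.sum_apply, LinearMap.smul_apply, Derivation.coeFn_coe]
  have : ∀ i : Fin n, pd i (φ (linForm b)) = b i • (1 : K) := fun i => by
    rw [hpd i, pderiv_linForm, phi_C']
  rw [Finset.sum_congr rfl fun i _ => by rw [this i, smul_smul, ← mul_comm (b i)],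
    ← Finset.sum_smul]

set_option linter.unusedSectionVars false in
lemma P_X (pd : Fin n → Derivation ℂ K K)
    (hpd : ∀ (i : Fin n) (q : MvPolynomial (Fin n) ℂ),
      pd i (φ q) = φ (MvPolynomial.pderiv i q))
    (b : Fin n → ℂ) (i : Fin n) :
    (∑ k, b k • (pd k).toLinearMap) (φ (MvPolynomial.X i)) = b i • (1 : K) := by
  simp only [LinearMap.sum_apply, LinearMap.smul_apply, Derivation.coeFn_coe]
  rw [Finset.sum_eq_single i]
  · rw [hpd i, MvPolynomial.pderiv_X_self, map_one]
  · intro k _ hk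
    rw [hpd k, MvPolynomial.pderiv_X_of_ne (Ne.symm hk), map_zero, smul_zero]
  · simp

end PLemmas

section Conj

variable {n : ℕ} {K : Type} [Field K] [Algebra ℂ K]
    {G : Subgroup (Matrix.GeneralLinearGroup (Fin n) ℂ)}

lemma rho_inv_apply (ρ : G →* (K ≃ₐ[ℂ] K)) (g : G) (x : K) : ρ g (ρ g⁻¹ x) = x := by
  have h : ρ g * ρ g⁻¹ = 1 := by rw [← _root_.map_mul, mul_inv_cancel, map_one]
  calc ρ g (ρ g⁻¹ x) = (ρ g * ρ g⁻¹) x := rfl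
  _ = x := by rw [h]; rfl

lemma rho_conj_apply (ρ : G →* (K ≃ₐ[ℂ] K)) (g s : G) (x : K) :
    ρ g (ρ s (ρ g⁻¹ x)) = ρ (g * s * g⁻¹) x := by
  rw [_root_.map_mul, _root_.map_mul]; rfl

/-- Conjugating a "reflection term" by `ρ g`. -/
lemma conj_refl_term (ρ : G →* (K ≃ₐ[ℂ] K)) (g s : G) (v : K) :
    ((ρ g).toLinearMap.comp
        ((LinearMap.mulLeft ℂ v).comp (LinearMap.id - (ρ s).toLinearMap))).comp
      (ρ g⁻¹).toLinearMap
    = (LinearMap.mulLeft ℂ (ρ g v)).comp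
        (LinearMap.id - (ρ (g * s * g⁻¹)).toLinearMap) := by
  ext f
  simp only [LinearMap.comp_apply, LinearMap.sub_apply, LinearMap.id_apply,
    LinearMap.mulLeft_apply, AlgEquiv.toLinearMap_apply, _root_.map_mul, map_sub,
    rho_inv_apply, rho_conj_apply]

lemma leibniz_sub (D1 D2 : K →ₗ[ℂ] K)
    (h1 : ∀ f g : K, D1 (f * g) = f * D1 g + g * D1 f)
    (h2 : ∀ f g : K, D2 (f * g) = f * D2 g + g * D2 f) (f g : K) :
    (D1 - D2) (f * g) = f * (D1 - D2) g + g * (D1 - D2) f := by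
  simp only [LinearMap.sub_apply, h1, h2]
  ring

lemma leibniz_conj (ρ : G →* (K ≃ₐ[ℂ] K)) (g : G) (D : K →ₗ[ℂ] K)
    (hD : ∀ f g : K, D (f * g) = f * D g + g * D f) (f f' : K) :
    (((ρ g).toLinearMap.comp D).comp (ρ g⁻¹).toLinearMap) (f * f')
      = f * (((ρ g).toLinearMap.comp D).comp (ρ g⁻¹).toLinearMap) f'
        + f' * (((ρ g).toLinearMap.comp D).comp (ρ g⁻¹).toLinearMap) f := by
  simp only [LinearMap.comp_apply, AlgEquiv.toLinearMap_apply, _root_.map_mul, hD, map_add,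
    _root_.map_mul, rho_inv_apply]

lemma conj_mem {S : Finset G}
    (hS : ∀ s : G, s ∈ S ↔
      Matrix.rank ((1 : Matrix (Fin n) (Fin n) ℂ) - matOf s) = 1)
    (g : G) {s : G} (hs : s ∈ S) : g * s * g⁻¹ ∈ S := by
  rw [hS] at hs ⊢
  have hfac : (1 : Matrix (Fin n) (Fin n) ℂ) - matOf (g * s * g⁻¹)
      = (matOf g * ((1 : Matrix (Fin n) (Fin n) ℂ) - matOf s)) * matOf g⁻¹ := by
    rw [Matrix.mul_sub, mul_one, Matrix.sub_mul, matOf_mul_inv, matOf_mul, matOf_mul]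
  rw [hfac, Matrix.rank_mul_eq_left_of_isUnit_det _ _ (isUnit_det_matOf g⁻¹),
    Matrix.rank_mul_eq_right_of_isUnit_det _ _ (isUnit_det_matOf g), hs]

end Conj

/-- **Commutation relations for Dunkl operators.**  With `G ⊆ GL_n(ℂ)` finite, `S` its set
of reflections, `α_s, α_s^∨, λ_s` the reflection data (normalized by `α_s(α_s^∨) = 2`) and
`c` conjugation-invariant, one has, for every `a ∈ ℂⁿ` and every covector `x = ξ ∈ (ℂⁿ)*`:
`[D_a, M_x] = x(a)·Id − Σ_{s∈S} c_s α_s(a) x(α_s^∨) ρ(s)`, and moreover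
`ρ(g) ∘ D_a ∘ ρ(g)⁻¹ = D_{ga}` for every `g ∈ G`. -/
theorem dunkl_commutation_relations (n : ℕ) (hn : 1 ≤ n)
    (K : Type) [Field K] [Algebra ℂ K]
    [Algebra (MvPolynomial (Fin n) ℂ) K] [IsScalarTower ℂ (MvPolynomial (Fin n) ℂ) K]
    [IsFractionRing (MvPolynomial (Fin n) ℂ) K]
    (G : Subgroup (Matrix.GeneralLinearGroup (Fin n) ℂ)) [Finite G]
    (S : Finset G)
    (hS : ∀ s : G, s ∈ S ↔
      Matrix.rank ((1 : Matrix (Fin n) (Fin n) ℂ) - matOf s) = 1)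
    (c lam : G → ℂ) (α αv : G → Fin n → ℂ)
    (hc : ∀ (g s : G), s ∈ S → c (g * s * g⁻¹) = c s)
    (hlam : ∀ s ∈ S, lam s ≠ 1)
    (hα : ∀ s ∈ S, α s ≠ 0)
    (heig : ∀ s ∈ S, Matrix.vecMul (α s) (matOf s⁻¹) = lam s • α s)
    (heigv : ∀ s ∈ S, Matrix.mulVec (matOf s) (αv s) = (lam s)⁻¹ • αv s)
    (hnorm : ∀ s ∈ S, ∑ i, α s i * αv s i = 2)
    (ρ : G →* (K ≃ₐ[ℂ] K))
    (hρ : ∀ (g : G) (i : Fin n),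
      ρ g (algebraMap (MvPolynomial (Fin n) ℂ) K (MvPolynomial.X i)) =
        algebraMap (MvPolynomial (Fin n) ℂ) K
          (∑ j, MvPolynomial.C (matOf g⁻¹ i j) * MvPolynomial.X j))
    (pd : Fin n → Derivation ℂ K K)
    (hpd : ∀ (i : Fin n) (q : MvPolynomial (Fin n) ℂ),
      pd i (algebraMap (MvPolynomial (Fin n) ℂ) K q)
        = algebraMap (MvPolynomial (Fin n) ℂ) K (MvPolynomial.pderiv i q)) :
    (∀ (a ξ : Fin n → ℂ),
      (dunklOp n K S c lam α ρ pd a).comp (mulLinForm n K ξ)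
          - (mulLinForm n K ξ).comp (dunklOp n K S c lam α ρ pd a)
        = (∑ i, ξ i * a i) • (LinearMap.id : K →ₗ[ℂ] K)
          - ∑ s ∈ S, (c s * (∑ i, α s i * a i) * (∑ i, ξ i * αv s i)) •
              (ρ s).toLinearMap) ∧
    (∀ (g : G) (a : Fin n → ℂ),
      (ρ g).toLinearMap.comp ((dunklOp n K S c lam α ρ pd a).comp (ρ g⁻¹).toLinearMap)
        = dunklOp n K S c lam α ρ pd (Matrix.mulVec (matOf g) a)) := by
  have hφinj : Function.Injective (algebraMap (MvPolynomial (Fin n) ℂ) K) :=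
    IsFractionRing.injective _ _
  have hus : ∀ s ∈ S, algebraMap (MvPolynomial (Fin n) ℂ) K (linForm (α s)) ≠ 0 := by
    intro s hs h
    exact linForm_ne_zero (hα s hs) (hφinj (by rw [h, map_zero]))
  -- eigenvalue of `s⁻¹` on `αv s` is `lam s`, and `lam s ≠ 0`
  have hlam0 : ∀ s ∈ S, lam s ≠ 0 := by
    intro s hs h0
    have h1 : Matrix.mulVec (matOf s) (αv s) = 0 := by
      rw [heigv s hs, h0, inv_zero, zero_smul]
    have h2 : αv s = 0 := by
      have := congrArg (Matrix.mulVec (matOf s⁻¹)) h1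
      rwa [Matrix.mulVec_mulVec, matOf_inv_mul, Matrix.one_mulVec, Matrix.mulVec_zero] at this
    have := hnorm s hs
    rw [h2] at this
    norm_num at this
  have hMv : ∀ s ∈ S, Matrix.mulVec (matOf s⁻¹) (αv s) = lam s • αv s := by
    intro s hs
    have h1 := congrArg (Matrix.mulVec (matOf s⁻¹)) (heigv s hs)
    rw [Matrix.mulVec_mulVec, matOf_inv_mul, Matrix.one_mulVec, Matrix.mulVec_smul] at h1
    have := congrArg (fun v => lam s • v) h1
    simpa [smul_smul, mul_inv_cancel₀ (hlam0 s hs)] using this.symm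
  constructor
  · -- Part 1 : the commutator formula
    intro a ξ
    unfold dunklOp mulLinForm
    set u : K := algebraMap (MvPolynomial (Fin n) ℂ) K (linForm ξ) with hu
    set P : K →ₗ[ℂ] K := ∑ i, a i • (pd i).toLinearMap with hP
    rw [LinearMap.sub_comp, LinearMap.comp_sub, sub_sub_sub_comm]
    have h1 : P.comp (LinearMap.mulLeft ℂ u) - (LinearMap.mulLeft ℂ u).comp P
        = (∑ i, ξ i * a i) • (LinearMap.id : K →ₗ[ℂ] K) := by
      rw [comm_mulLeft P (P_leibniz pd a) u, hu, P_linForm pd hpd a ξ, mulLeft_smul_one]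
    rw [h1]
    congr 1
    rw [lsum_comp, lcomp_sum, ← Finset.sum_sub_distrib]
    refine Finset.sum_congr rfl fun s hs => ?_
    erw [LinearMap.smul_comp, LinearMap.comp_smul, ← smul_sub, refl_comm]
    -- the vector `ξ - ξ·s⁻¹` is proportional to `α s`
    have hmem : ξ - Matrix.vecMul ξ (matOf s⁻¹) ∈ LinearMap.range
        (((1 : Matrix (Fin n) (Fin n) ℂ) - matOf s⁻¹).transpose.mulVecLin) := by
      refine ⟨ξ, ?_⟩
      rw [Matrix.mulVecLin_apply, Matrix.mulVec_transpose, Matrix.vecMul_sub, Matrix.vecMul_one]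
    obtain ⟨μ, hμ⟩ := reflection_span ((hS s).mp hs) (hα s hs) (hlam s hs) (heig s hs) hmem
    -- pin down `μ` by pairing with `αv s`
    have hpair : μ * 2 = (1 - lam s) * (∑ i, ξ i * αv s i) := by
      have hd := congrArg (fun v => dotProduct v (αv s)) hμ
      simp only [sub_dotProduct, smul_dotProduct, smul_eq_mul] at hd
      rw [← Matrix.dotProduct_mulVec, hMv s hs, dotProduct_smul, smul_eq_mul,
        ← dot_eq (α s) (αv s), hnorm s hs] at hd
      rw [dot_eq]
      linear_combination -hd
    -- compute the multiplier
    have hv : (algebraMap (MvPolynomial (Fin n) ℂ) K (linForm (α s)))⁻¹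
        * (u - ρ s u) = μ • (1 : K) := by
      rw [hu, rho_linForm ρ hρ s ξ, ← map_sub, ← linForm_sub, hμ, linForm_smul,
        _root_.map_mul, phi_C, smul_mul_assoc, one_mul, mul_smul_comm,
        inv_mul_cancel₀ (hus s hs)]
    rw [hv, mulLeft_smul_one, LinearMap.smul_comp, LinearMap.id_comp, smul_smul]
    have hlam1 : (1 : ℂ) - lam s ≠ 0 := sub_ne_zero_of_ne (Ne.symm (hlam s hs))
    congr 1
    field_simp
    linear_combination (c s * (∑ i, α s i * a i)) * hpair
  · -- Part 2 : equivariance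
    intro g a
    unfold dunklOp
    rw [LinearMap.sub_comp, LinearMap.comp_sub]
    congr 1
    · -- the derivation part
      rw [← sub_eq_zero]
      apply leibniz_ext (n := n) (K := K)
      · exact fun f f' => leibniz_sub _ _
          (fun x y => leibniz_conj ρ g _ (P_leibniz pd a) x y)
          (fun x y => P_leibniz pd _ x y) f f'
      · intro i
        simp only [LinearMap.sub_apply, LinearMap.comp_apply, AlgEquiv.toLinearMap_apply]
        have e1 := hρ g⁻¹ i
        simp only [inv_inv] at e1
        rw [e1, show (∑ j, MvPolynomial.C (matOf g i j) * MvPolynomial.X j)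
            = linForm (matOf g i) from rfl,
          P_linForm pd hpd a (matOf g i), _root_.map_smul, map_one,
          P_X pd hpd (Matrix.mulVec (matOf g) a) i,
          show (∑ k, matOf g i k * a k) = Matrix.mulVec (matOf g) a i from rfl, sub_self]
    · -- the reflection part
      rw [lsum_comp, lcomp_sum]
      refine Finset.sum_nbij' (fun s => g * s * g⁻¹) (fun t => g⁻¹ * t * g)
        (fun s hs => conj_mem hS g hs) (fun t ht => by simpa using conj_mem hS g⁻¹ ht)
        (fun s _ => by group) (fun t _ => by group) (fun s hs => ?_)
      have htS : g * s * g⁻¹ ∈ S := conj_mem hS g hs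
      -- `w = α_s · g⁻¹` is an eigenvector of `(gsg⁻¹)⁻¹` with eigenvalue `lam s`
      have hmat : matOf g⁻¹ * matOf (g * s * g⁻¹)⁻¹ = matOf s⁻¹ * matOf g⁻¹ := by
        rw [← matOf_mul, ← matOf_mul]
        congr 1
        group
      have hw_eig : Matrix.vecMul (Matrix.vecMul (α s) (matOf g⁻¹)) (matOf (g * s * g⁻¹)⁻¹)
          = lam s • Matrix.vecMul (α s) (matOf g⁻¹) := by
        rw [Matrix.vecMul_vecMul, hmat, ← Matrix.vecMul_vecMul, heig s hs, Matrix.smul_vecMul]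
      obtain ⟨μ, hμ⟩ := reflection_eigen ((hS _).mp htS) (hα _ htS) (hlam _ htS)
        (heig _ htS) (hlam s hs) hw_eig
      have hw0 : Matrix.vecMul (α s) (matOf g⁻¹) ≠ 0 := by
        intro h
        apply hα s hs
        have h2 := congrArg (fun v => Matrix.vecMul v (matOf g)) h
        simpa [Matrix.vecMul_vecMul, matOf_inv_mul] using h2
      have hμ0 : μ ≠ 0 := by
        rintro rfl
        rw [zero_smul] at hμ
        exact hw0 hμ
      have hαs : α s = μ • Matrix.vecMul (α (g * s * g⁻¹)) (matOf g) := by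
        have h2 := congrArg (fun v => Matrix.vecMul v (matOf g)) hμ
        simpa [Matrix.vecMul_vecMul, matOf_inv_mul, Matrix.smul_vecMul] using h2
      have hlamt : lam (g * s * g⁻¹) = lam s := by
        have h1 : (μ * lam (g * s * g⁻¹)) • α (g * s * g⁻¹)
            = (lam s * μ) • α (g * s * g⁻¹) := by
          rw [mul_smul, ← heig _ htS, ← Matrix.smul_vecMul, ← hμ, hw_eig, hμ, mul_smul]
        have h3 := sub_eq_zero_of_eq h1
        rw [← sub_smul] at h3
        rcases smul_eq_zero.mp h3 with h | h
        · exact mul_left_cancel₀ hμ0 (by linear_combination h)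
        · exact absurd h (hα _ htS)
      have hSa : (∑ i, α s i * a i)
          = μ * (∑ i, α (g * s * g⁻¹) i * Matrix.mulVec (matOf g) a i) := by
        rw [dot_eq, dot_eq, hαs, smul_dotProduct, smul_eq_mul,
          ← Matrix.dotProduct_mulVec]
      have hval : ρ g ((algebraMap (MvPolynomial (Fin n) ℂ) K (linForm (α s)))⁻¹)
          = μ⁻¹ • (algebraMap (MvPolynomial (Fin n) ℂ) K
              (linForm (α (g * s * g⁻¹))))⁻¹ := by
        rw [map_inv₀, rho_linForm ρ hρ g (α s), hμ, linForm_smul, _root_.map_mul, phi_C,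
          smul_mul_assoc, one_mul, smul_inv₀]
      rw [LinearMap.smul_comp, LinearMap.comp_smul, ← LinearMap.comp_assoc,
        conj_refl_term ρ g s, hval, mulLeft_smul, LinearMap.smul_comp, smul_smul]
      congr 1
      rw [hc g s hs, hlamt, hSa]
      have hlam1 : (1 : ℂ) - lam s ≠ 0 := sub_ne_zero_of_ne (Ne.symm (hlam s hs))
      field_simp

end
end

section
/- (C. Dunkl.) Let n ≥ 2 and let r be a positive integer not divisible by n; set c = r/n. For i = 1,…,n define f_i ∈ ℂ[x_1,…,x_n] as the coefficient of z^{−1} in the formal expansion at z = ∞ of [(z−x_1)⋯(z−x_n)]^{r/n} / (z−x_i). Then each f_i is a nonzero homogeneous polynomial of degree r, Σ_{i=1}^n f_i = 0, and each f_i is a singular vector for the type A Dunkl operators with parameter c = r/n: for every y = (y_1,…,y_n) ∈ ℂ^n with Σ_i y_i = 0 and every i, one has D_y f_i = 0. -/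
set_option synthInstance.maxHeartbeats 1000000
set_option maxHeartbeats 1000000


open MvPolynomial

/-- The generalized binomial coefficient `μ(μ−1)⋯(μ−k+1)/k!` for `μ ∈ ℂ`. -/
noncomputable def genBinom (μ : ℂ) (k : ℕ) : ℂ :=
  (∏ m ∈ Finset.range k, (μ - m)) / (k.factorial : ℂ)

/-- The formal expansion at `z = ∞` of `[(z−x₁)⋯(z−xₙ)]^μ · z^{-r}`, written as a power
series in `w = z⁻¹`: the product over `j` of `(1 − xⱼw)^μ = Σ_k binom(μ,k)(−xⱼ)^k w^k`. -/
noncomputable def prodBinomSeries (n : ℕ) (μ : ℂ) :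
    PowerSeries (MvPolynomial (Fin n) ℂ) :=
  ∏ j : Fin n, PowerSeries.mk fun k =>
    MvPolynomial.C ((-1 : ℂ) ^ k * genBinom μ k) * MvPolynomial.X j ^ k

/-- `jackVector n r i` is the coefficient of `z⁻¹` in the formal expansion at `z = ∞` of
`[(z−x₁)⋯(z−xₙ)]^{r/n}/(z−xᵢ)`: it equals the coefficient of `w^r` in
`∏ⱼ(1−xⱼw)^{r/n} · Σ_k xᵢ^k w^k`. -/
noncomputable def jackVector (n r : ℕ) (i : Fin n) : MvPolynomial (Fin n) ℂ :=
  PowerSeries.coeff (R := MvPolynomial (Fin n) ℂ) r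
    (prodBinomSeries n ((r : ℂ) / (n : ℂ)) * PowerSeries.mk fun k => MvPolynomial.X i ^ k)

lemma genBinom_zero (μ : ℂ) : genBinom μ 0 = 1 := by simp [genBinom]

lemma genBinom_rec (μ : ℂ) (k : ℕ) :
    ((k : ℂ) + 1) * genBinom μ (k + 1) = (μ - k) * genBinom μ k := by
  have hfac : (k.factorial : ℂ) ≠ 0 := Nat.cast_ne_zero.mpr k.factorial_ne_zero
  have hk1 : ((k : ℂ) + 1) ≠ 0 := by
    have := Nat.cast_ne_zero (R := ℂ) (n := k + 1) |>.mpr (Nat.succ_ne_zero k)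
    push_cast at this; exact this
  unfold genBinom
  rw [Finset.prod_range_succ, Nat.factorial_succ]
  push_cast
  field_simp

lemma genBinom_pascal (μ : ℂ) (k : ℕ) :
    genBinom μ (k + 1) = genBinom (μ - 1) (k + 1) + genBinom (μ - 1) k := by
  have hfac : (k.factorial : ℂ) ≠ 0 := Nat.cast_ne_zero.mpr k.factorial_ne_zero
  have hk1 : ((k : ℂ) + 1) ≠ 0 := by
    have := Nat.cast_ne_zero (R := ℂ) (n := k + 1) |>.mpr (Nat.succ_ne_zero k)
    push_cast at this; exact this
  have e1 : ∏ m ∈ Finset.range (k + 1), (μ - m)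
      = μ * ∏ m ∈ Finset.range k, (μ - 1 - m) := by
    rw [Finset.prod_range_succ']
    simp only [Nat.cast_zero, sub_zero]
    rw [mul_comm]
    congr 1
    refine Finset.prod_congr rfl fun m _ => ?_
    push_cast; ring
  have e2 : ∏ m ∈ Finset.range (k + 1), (μ - 1 - m)
      = (∏ m ∈ Finset.range k, (μ - 1 - m)) * (μ - 1 - k) := Finset.prod_range_succ _ _
  unfold genBinom
  rw [e1, e2, Nat.factorial_succ]
  push_cast
  field_simp
  ring

lemma genBinom_altsum (μ : ℂ) (r : ℕ) :
    ∑ k ∈ Finset.range (r + 1), (-1 : ℂ) ^ k * genBinom μ k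
      = (-1) ^ r * genBinom (μ - 1) r := by
  induction r with
  | zero => simp [genBinom_zero]
  | succ r ih =>
      rw [Finset.sum_range_succ, ih, genBinom_pascal]
      ring

lemma genBinom_ne_zero {n r : ℕ} (hn : n ≠ 0) (hnr : ¬ n ∣ r) :
    genBinom ((r : ℂ) / (n : ℂ) - 1) r ≠ 0 := by
  have hfac : (r.factorial : ℂ) ≠ 0 := Nat.cast_ne_zero.mpr r.factorial_ne_zero
  have hnC : (n : ℂ) ≠ 0 := Nat.cast_ne_zero.mpr hn
  refine div_ne_zero (Finset.prod_ne_zero_iff.mpr fun m _ => ?_) hfac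
  intro h0
  apply hnr
  have : (r : ℂ) = ((m + 1) * n : ℕ) := by
    push_cast
    field_simp at h0
    linear_combination h0
  have : r = (m + 1) * n := Nat.cast_injective this
  exact ⟨m + 1, by rw [this]; ring⟩

section Euler

variable {σ : Type*} [Fintype σ] [DecidableEq σ]

lemma euler_monomial (v : σ →₀ ℕ) (a : ℂ) :
    ∑ j, X j * pderiv j (monomial v a) = (∑ j, v j) • monomial v a := by
  rw [Finset.sum_smul]
  refine Finset.sum_congr rfl fun j _ => ?_
  rw [pderiv_monomial]
  by_cases h : v j = 0
  · simp [h]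
  · have hv : Finsupp.single j 1 + (v - Finsupp.single j 1) = v := by
      ext m
      by_cases hm : m = j
      · subst hm; simp; omega
      · simp [Finsupp.single_apply, hm, Ne.symm hm]
    rw [X, monomial_mul, hv, one_mul, MvPolynomial.smul_monomial]
    congr 1
    rw [nsmul_eq_mul]; ring

lemma euler_identity {φ : MvPolynomial σ ℂ} {d : ℕ} (hφ : φ.IsHomogeneous d) :
    ∑ j, X j * pderiv j φ = d • φ := by
  calc ∑ j, X j * pderiv j φ
      = ∑ j, X j * pderiv j (∑ v ∈ φ.support, monomial v (coeff v φ)) := by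
        rw [← φ.as_sum]
    _ = ∑ v ∈ φ.support, ∑ j, X j * pderiv j (monomial v (coeff v φ)) := by
        simp_rw [map_sum, Finset.mul_sum]
        rw [Finset.sum_comm]
    _ = ∑ v ∈ φ.support, d • monomial v (coeff v φ) := by
        refine Finset.sum_congr rfl fun v hv => ?_
        rw [euler_monomial]
        congr 1
        have h1 : Finsupp.weight (1 : σ → ℕ) v = d := hφ (mem_support_iff.mp hv)
        rw [show (1 : σ → ℕ) = fun _ => 1 from rfl, ← Finsupp.degree_eq_weight_one] at h1
        rw [← h1]
        exact (Finsupp.degree_eq_sum v).symm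
    _ = d • φ := by rw [← Finset.smul_sum, ← φ.as_sum]

end Euler

namespace DunklAux

variable {n : ℕ}

/-- abbreviation for the coefficient ring -/
local notation "R⟨" n "⟩" => MvPolynomial (Fin n) ℂ

/-- the geometric series `1/(1-xᵢw)`. -/
noncomputable def Sser (n : ℕ) (i : Fin n) : PowerSeries (MvPolynomial (Fin n) ℂ) :=
  PowerSeries.mk fun k => X i ^ k

/-- the binomial series `(1-xⱼw)^μ`. -/
noncomputable def Bser (n : ℕ) (μ : ℂ) (j : Fin n) : PowerSeries (MvPolynomial (Fin n) ℂ) :=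
  PowerSeries.mk fun k => C ((-1 : ℂ) ^ k * genBinom μ k) * X j ^ k

lemma prodBinomSeries_eq (n : ℕ) (μ : ℂ) :
    prodBinomSeries n μ = ∏ j : Fin n, Bser n μ j := rfl

/-- `1 - xⱼ w`. -/
noncomputable def user (n : ℕ) (j : Fin n) : PowerSeries (MvPolynomial (Fin n) ℂ) :=
  1 - PowerSeries.C (X j) * PowerSeries.X

/-- coefficientwise partial derivative of a power series. -/
noncomputable def pdS (j : Fin n) (f : PowerSeries (MvPolynomial (Fin n) ℂ)) :
    PowerSeries (MvPolynomial (Fin n) ℂ) :=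
  PowerSeries.mk fun k => pderiv j (PowerSeries.coeff k f)

lemma coeff_pdS (j : Fin n) (f : PowerSeries (MvPolynomial (Fin n) ℂ)) (k : ℕ) :
    PowerSeries.coeff k (pdS j f) = pderiv j (PowerSeries.coeff k f) :=
  PowerSeries.coeff_mk _ _

lemma pdS_mul (j : Fin n) (f g : PowerSeries (MvPolynomial (Fin n) ℂ)) :
    pdS j (f * g) = pdS j f * g + f * pdS j g := by
  ext k
  simp only [pdS, PowerSeries.coeff_mk, map_add, PowerSeries.coeff_mul, map_sum, pderiv_mul]
  rw [← Finset.sum_add_distrib]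

lemma pdS_one (j : Fin n) : pdS j (1 : PowerSeries (MvPolynomial (Fin n) ℂ)) = 0 := by
  ext k
  simp only [pdS, PowerSeries.coeff_mk, PowerSeries.coeff_one]
  split <;> simp

lemma pdS_prod_eq_zero (j : Fin n) {ι : Type*} (s : Finset ι)
    (F : ι → PowerSeries (MvPolynomial (Fin n) ℂ)) (hF : ∀ l ∈ s, pdS j (F l) = 0) :
    pdS j (∏ l ∈ s, F l) = 0 := by
  classical
  induction s using Finset.induction_on with
  | empty => simpa using pdS_one j
  | @insert a s' hx ih =>
      rw [Finset.prod_insert hx, pdS_mul, hF a (Finset.mem_insert_self a s'),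
        ih fun l hl => hF l (Finset.mem_insert_of_mem hl)]
      simp

lemma pdS_prod (j : Fin n) {ι : Type*} [DecidableEq ι] (s : Finset ι) (j₀ : ι) (hj₀ : j₀ ∈ s)
    (F : ι → PowerSeries (MvPolynomial (Fin n) ℂ))
    (hF : ∀ l ∈ s, l ≠ j₀ → pdS j (F l) = 0) :
    pdS j (∏ l ∈ s, F l) = pdS j (F j₀) * ∏ l ∈ s.erase j₀, F l := by
  rw [← Finset.prod_erase_mul s F hj₀, pdS_mul,
    pdS_prod_eq_zero j _ F fun l hl => hF l (Finset.mem_of_mem_erase hl)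
      (Finset.ne_of_mem_erase hl)]
  ring

lemma pderiv_X_pow_succ (i : Fin n) (k : ℕ) :
    pderiv i ((X i : MvPolynomial (Fin n) ℂ) ^ (k + 1)) = C ((k : ℂ) + 1) * X i ^ k := by
  rw [pderiv_pow, pderiv_X_self, mul_one, Nat.add_sub_cancel,
    show ((k : ℂ) + 1) = ((k + 1 : ℕ) : ℂ) by push_cast; ring, map_natCast]

lemma X_mul_pderiv_X_pow (i : Fin n) (k : ℕ) :
    (X i : MvPolynomial (Fin n) ℂ) * pderiv i ((X i : MvPolynomial (Fin n) ℂ) ^ k)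
      = C (k : ℂ) * X i ^ k := by
  cases k with
  | zero => simp
  | succ k =>
      rw [pderiv_X_pow_succ]
      push_cast
      ring

lemma pderiv_X_pow_ne {i j : Fin n} (h : j ≠ i) (k : ℕ) :
    pderiv j ((X i : MvPolynomial (Fin n) ℂ) ^ k) = 0 := by
  rw [pderiv_pow, pderiv_X_of_ne (Ne.symm h)]
  ring

lemma uS (j : Fin n) : user n j * Sser n j = 1 := by
  refine PowerSeries.ext fun k => ?_
  rcases k with _ | k
  · simp [user, Sser, sub_mul, mul_assoc, PowerSeries.coeff_C_mul,
      PowerSeries.coeff_zero_X_mul]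
  · rw [user, sub_mul, one_mul, mul_assoc, map_sub, PowerSeries.coeff_C_mul,
      PowerSeries.coeff_succ_X_mul]
    simp only [Sser, PowerSeries.coeff_mk, PowerSeries.coeff_one, Nat.succ_ne_zero, if_false]
    rw [pow_succ]
    ring

lemma solve_u {j : Fin n} {f g : PowerSeries (MvPolynomial (Fin n) ℂ)}
    (h : user n j * f = g) : f = Sser n j * g := by
  calc f = (user n j * Sser n j) * f := by rw [uS]; ring
    _ = Sser n j * g := by rw [← h]; ring

lemma xS (j : Fin n) :
    PowerSeries.C (X j) * (PowerSeries.X * Sser n j) = Sser n j - 1 := by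
  have h := uS j
  unfold user at h
  rw [sub_mul, one_mul, mul_assoc] at h
  linear_combination -h

lemma pdS_S_ne {j i : Fin n} (h : j ≠ i) : pdS j (Sser n i) = 0 := by
  refine PowerSeries.ext fun k => ?_
  simp [pdS, Sser, PowerSeries.coeff_mk, pderiv_X_pow_ne h]

lemma pdS_B_ne {j l : Fin n} (μ : ℂ) (h : j ≠ l) : pdS j (Bser n μ l) = 0 := by
  refine PowerSeries.ext fun k => ?_
  simp [pdS, Bser, PowerSeries.coeff_mk, pderiv_X_pow_ne h, pderiv_C_mul]

lemma uSpd (i : Fin n) : user n i * pdS i (Sser n i) = PowerSeries.X * Sser n i := by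
  refine PowerSeries.ext fun k => ?_
  rcases k with _ | k
  · simp [user, Sser, pdS, sub_mul, mul_assoc, PowerSeries.coeff_mk,
      PowerSeries.coeff_C_mul, PowerSeries.coeff_zero_X_mul]
  · rw [user, sub_mul, one_mul, mul_assoc, map_sub, PowerSeries.coeff_C_mul,
      PowerSeries.coeff_succ_X_mul, PowerSeries.coeff_succ_X_mul]
    simp only [pdS, Sser, PowerSeries.coeff_mk]
    rw [pderiv_X_pow_succ, X_mul_pderiv_X_pow, map_add, map_one]
    ring

lemma pdS_S_self (i : Fin n) :
    pdS i (Sser n i) = PowerSeries.X * (Sser n i * Sser n i) := by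
  rw [solve_u (uSpd i)]
  ring

lemma uB (j : Fin n) (μ : ℂ) :
    user n j * pdS j (Bser n μ j) = (-μ) • (PowerSeries.X * Bser n μ j) := by
  refine PowerSeries.ext fun k => ?_
  rcases k with _ | k
  · simp [user, Bser, pdS, sub_mul, mul_assoc, PowerSeries.coeff_mk, PowerSeries.coeff_smul,
      PowerSeries.coeff_C_mul, PowerSeries.coeff_zero_X_mul]
  · rw [user, sub_mul, one_mul, mul_assoc, map_sub, PowerSeries.coeff_C_mul,
      PowerSeries.coeff_succ_X_mul, PowerSeries.coeff_smul, PowerSeries.coeff_succ_X_mul]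
    simp only [pdS, Bser, PowerSeries.coeff_mk, pderiv_C_mul]
    rw [pderiv_X_pow_succ]
    have hs : ((-1 : ℂ)) ^ (k + 1) * genBinom μ (k + 1) * ((k : ℂ) + 1)
        - ((-1 : ℂ)) ^ k * genBinom μ k * (k : ℂ)
        = (-μ) * ((-1 : ℂ) ^ k * genBinom μ k) := by
      linear_combination ((-1 : ℂ)) ^ (k + 1) * genBinom_rec μ k
    have hC := congrArg (MvPolynomial.C (σ := Fin n) (R := ℂ)) hs
    simp only [map_sub, map_mul, map_neg, map_add, map_one, map_natCast] at hC
    rw [MvPolynomial.smul_eq_C_mul, mul_left_comm (X j), X_mul_pderiv_X_pow]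
    simp only [map_mul, map_neg, map_add, map_one, map_natCast]
    linear_combination (X j ^ k) * hC

lemma pdS_B_self (j : Fin n) (μ : ℂ) :
    pdS j (Bser n μ j) = (-μ) • (PowerSeries.X * (Bser n μ j * Sser n j)) := by
  rw [solve_u (uB j μ), mul_smul_comm]
  ring_nf

/-- the product `∏ⱼ (1-xⱼw)^μ`. -/
noncomputable def Pser (n : ℕ) (μ : ℂ) : PowerSeries (MvPolynomial (Fin n) ℂ) :=
  ∏ j : Fin n, Bser n μ j

noncomputable def Qser (n : ℕ) (μ : ℂ) (i : Fin n) : PowerSeries (MvPolynomial (Fin n) ℂ) :=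
  Pser n μ * Sser n i

lemma pdS_P (μ : ℂ) (j : Fin n) :
    pdS j (Pser n μ) = (-μ) • (PowerSeries.X * (Pser n μ * Sser n j)) := by
  rw [Pser, pdS_prod j Finset.univ j (Finset.mem_univ j) _
    (fun l _ hl => pdS_B_ne μ (Ne.symm hl)), pdS_B_self, smul_mul_assoc]
  congr 1
  rw [show PowerSeries.X * (Bser n μ j * Sser n j) * ∏ l ∈ Finset.univ.erase j, Bser n μ l
      = PowerSeries.X * ((Bser n μ j * ∏ l ∈ Finset.univ.erase j, Bser n μ l) * Sser n j)
    from by ring, Finset.mul_prod_erase Finset.univ _ (Finset.mem_univ j)]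

lemma pdS_Q (μ : ℂ) (j i : Fin n) :
    pdS j (Qser n μ i)
      = (-μ) • (PowerSeries.X * (Pser n μ * Sser n i * Sser n j))
        + (if j = i then PowerSeries.X * (Pser n μ * Sser n i * Sser n i) else 0) := by
  rw [Qser, pdS_mul, pdS_P]
  by_cases h : j = i
  · subst h
    rw [if_pos rfl, pdS_S_self, smul_mul_assoc]
    congr 1
    · congr 1; ring
    · ring
  · rw [if_neg h, pdS_S_ne h, smul_mul_assoc, mul_zero, add_zero, add_zero]
    congr 1
    ring

lemma XCX (μ : ℂ) (i j : Fin n) :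
    PowerSeries.X * (PowerSeries.C (X j)
        * (PowerSeries.X * (Pser n μ * Sser n i * Sser n j)))
      = (PowerSeries.X * (Pser n μ * Sser n i)) * (Sser n j - 1) := by
  rw [← xS j]
  ring

lemma key_claimB (μ : ℂ) (i j : Fin n) :
    PowerSeries.X * (PowerSeries.C (X j) * pdS j (Qser n μ i))
      = (-μ) • ((PowerSeries.X * (Pser n μ * Sser n i)) * (Sser n j - 1))
        + (if j = i then (PowerSeries.X * (Pser n μ * Sser n i)) * (Sser n i - 1) else 0) := by
  rw [pdS_Q, mul_add, mul_add, mul_smul_comm, mul_smul_comm, XCX]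
  congr 1
  split_ifs with h
  · subst h
    exact XCX μ j j
  · simp

lemma claimB (μ : ℂ) (i : Fin n) :
    PowerSeries.X * ∑ j, PowerSeries.C (X j) * pdS j (Qser n μ i)
      = (PowerSeries.X * (Pser n μ * Sser n i * Sser n i)
          - μ • ∑ j, PowerSeries.X * (Pser n μ * Sser n i * Sser n j))
        + (μ * n - 1) • (PowerSeries.X * Qser n μ i) := by
  rw [Finset.mul_sum]
  rw [Finset.sum_congr rfl fun j _ => key_claimB μ i j]
  rw [Finset.sum_add_distrib, Finset.sum_ite_eq' Finset.univ i
      (fun _ => (PowerSeries.X * (Pser n μ * Sser n i)) * (Sser n i - 1)),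
    if_pos (Finset.mem_univ i)]
  have e1 : ∀ j : Fin n, PowerSeries.X * (Pser n μ * Sser n i * Sser n j)
      = (PowerSeries.X * (Pser n μ * Sser n i)) * Sser n j := fun j => by ring
  simp only [e1]
  set G := PowerSeries.X * (Pser n μ * Sser n i) with hG
  have e2 : PowerSeries.X * Qser n μ i = G := by rw [Qser, hG]
  rw [e2]
  simp only [mul_sub, mul_one]
  rw [← Finset.smul_sum, Finset.sum_sub_distrib, Finset.sum_const, Finset.card_univ,
    Fintype.card_fin, ← Nat.cast_smul_eq_nsmul ℂ]
  module

lemma claimA (μ : ℂ) (i : Fin n) (y : Fin n → ℂ) :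
    ∑ j, y j • pdS j (Qser n μ i)
      = y i • (PowerSeries.X * (Pser n μ * Sser n i * Sser n i)
            - μ • ∑ j, PowerSeries.X * (Pser n μ * Sser n i * Sser n j))
        + μ • ∑ l, (y i - y l) • (PowerSeries.X * (Pser n μ * Sser n i * Sser n l)) := by
  simp only [pdS_Q, smul_add, smul_ite, smul_zero]
  rw [Finset.sum_add_distrib, Finset.sum_ite_eq' Finset.univ i, if_pos (Finset.mem_univ i)]
  rw [smul_sub]
  simp only [Finset.smul_sum]
  rw [Finset.sum_congr rfl (fun x _ =>
    show y x • (-μ) • (PowerSeries.X * (Pser n μ * Sser n i * Sser n x))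
        = μ • ((y i - y x) • (PowerSeries.X * (Pser n μ * Sser n i * Sser n x)))
          - y i • (μ • (PowerSeries.X * (Pser n μ * Sser n i * Sser n x)))
      from by module)]
  rw [Finset.sum_sub_distrib]
  abel

lemma claimC (μ : ℂ) :
    μ • ((PowerSeries.X * Pser n μ) * ∑ j, Sser n j)
      = (μ * n) • (PowerSeries.X * Pser n μ)
        - PowerSeries.X * ∑ j, PowerSeries.C (X j) * pdS j (Pser n μ) := by
  have key : ∀ j : Fin n, PowerSeries.X * (PowerSeries.C (X j) * pdS j (Pser n μ))
      = (-μ) • ((PowerSeries.X * Pser n μ) * (Sser n j - 1)) := by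
    intro j
    rw [pdS_P, mul_smul_comm, mul_smul_comm]
    congr 1
    rw [← xS j]
    ring
  have e0 : PowerSeries.X * ∑ j, PowerSeries.C (X j) * pdS j (Pser n μ)
      = ∑ j : Fin n, PowerSeries.X * (PowerSeries.C (X j) * pdS j (Pser n μ)) :=
    Finset.mul_sum _ _ _
  rw [e0, Finset.sum_congr rfl fun j _ => key j]
  simp only [mul_sub, mul_one]
  rw [← Finset.smul_sum, Finset.sum_sub_distrib, Finset.sum_const, Finset.card_univ,
    Fintype.card_fin, ← Nat.cast_smul_eq_nsmul ℂ, Finset.mul_sum]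
  module

def HomCoeffs (f : PowerSeries (MvPolynomial (Fin n) ℂ)) : Prop :=
  ∀ k, (PowerSeries.coeff k f).IsHomogeneous k

lemma homCoeffs_one : HomCoeffs (1 : PowerSeries (MvPolynomial (Fin n) ℂ)) := by
  intro k
  rw [PowerSeries.coeff_one]
  split_ifs with h
  · subst h; exact isHomogeneous_one _ _
  · exact isHomogeneous_zero _ _ _

lemma homCoeffs_mul {f g : PowerSeries (MvPolynomial (Fin n) ℂ)}
    (hf : HomCoeffs f) (hg : HomCoeffs g) : HomCoeffs (f * g) := by
  intro k
  rw [PowerSeries.coeff_mul]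
  refine IsHomogeneous.sum _ _ _ fun p hp => ?_
  have := (hf p.1).mul (hg p.2)
  rwa [Finset.HasAntidiagonal.mem_antidiagonal.mp hp] at this

lemma homCoeffs_prod {ι : Type*} (s : Finset ι)
    (F : ι → PowerSeries (MvPolynomial (Fin n) ℂ)) (hF : ∀ l ∈ s, HomCoeffs (F l)) :
    HomCoeffs (∏ l ∈ s, F l) := by
  classical
  induction s using Finset.induction_on with
  | empty => simpa using homCoeffs_one
  | @insert a s' ha ih =>
      rw [Finset.prod_insert ha]
      exact homCoeffs_mul (hF a (Finset.mem_insert_self a s'))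
        (ih fun l hl => hF l (Finset.mem_insert_of_mem hl))

lemma homCoeffs_S (i : Fin n) : HomCoeffs (Sser n i) := by
  intro k
  rw [Sser, PowerSeries.coeff_mk]
  simpa using isHomogeneous_X_pow (R := ℂ) i k

lemma homCoeffs_B (μ : ℂ) (j : Fin n) : HomCoeffs (Bser n μ j) := by
  intro k
  rw [Bser, PowerSeries.coeff_mk]
  simpa using isHomogeneous_C_mul_X_pow ((-1 : ℂ) ^ k * genBinom μ k) j k

lemma homCoeffs_P (μ : ℂ) : HomCoeffs (Pser n μ) :=
  homCoeffs_prod _ _ fun l _ => homCoeffs_B μ l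

lemma homCoeffs_Q (μ : ℂ) (i : Fin n) : HomCoeffs (Qser n μ i) :=
  homCoeffs_mul (homCoeffs_P μ) (homCoeffs_S i)

lemma jackVector_eq (r : ℕ) (i : Fin n) :
    jackVector n r i = PowerSeries.coeff r (Qser n ((r : ℂ) / (n : ℂ)) i) := rfl

/-- the polynomial `hpol μ i l = coeff_r (w ∏(1-xⱼw)^μ /((1-xᵢw)(1-x_lw)))`. -/
noncomputable def hpol (n r : ℕ) (μ : ℂ) (i l : Fin n) : MvPolynomial (Fin n) ℂ :=
  PowerSeries.coeff r (PowerSeries.X * (Pser n μ * Sser n i * Sser n l))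

/-- Coefficient extraction from claimB plus Euler: the series `Ψ` has vanishing
`r`-th coefficient when `μ n = r`. -/
lemma coeff_psi_eq_zero {r : ℕ} (hr : 0 < r) {μ : ℂ} (hμ : μ * n = r) (i : Fin n) :
    PowerSeries.coeff r
      (PowerSeries.X * (Pser n μ * Sser n i * Sser n i)
        - μ • ∑ j, PowerSeries.X * (Pser n μ * Sser n i * Sser n j)) = 0 := by
  obtain ⟨r', rfl⟩ : ∃ r', r = r' + 1 := ⟨r - 1, by omega⟩
  have hB := claimB μ i
  have e : PowerSeries.X * (Pser n μ * Sser n i * Sser n i)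
      - μ • ∑ j, PowerSeries.X * (Pser n μ * Sser n i * Sser n j)
      = PowerSeries.X * ∑ j, PowerSeries.C (X j) * pdS j (Qser n μ i)
        - (μ * n - 1) • (PowerSeries.X * Qser n μ i) := by
    rw [hB]; ring
  rw [e, map_sub, PowerSeries.coeff_succ_X_mul, PowerSeries.coeff_smul,
    PowerSeries.coeff_succ_X_mul]
  rw [map_sum]
  have e2 : ∀ j : Fin n, PowerSeries.coeff r'
      (PowerSeries.C (X j) * pdS j (Qser n μ i))
      = X j * pderiv j (PowerSeries.coeff r' (Qser n μ i)) := fun j => by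
    rw [PowerSeries.coeff_C_mul, coeff_pdS]
  rw [Finset.sum_congr rfl fun j _ => e2 j,
    euler_identity (homCoeffs_Q μ i r')]
  rw [hμ]
  push_cast
  rw [add_sub_cancel_right, ← Nat.cast_smul_eq_nsmul ℂ, sub_self]

/-- The main polynomial identity: the Dunkl operator kills `jackVector`. -/
lemma main_identity {r : ℕ} (hr : 0 < r) {μ : ℂ} (hμ : μ * n = r) (i : Fin n)
    (y : Fin n → ℂ) :
    ∑ j, y j • pderiv j (PowerSeries.coeff r (Qser n μ i))
      = μ • ∑ l, (y i - y l) • hpol n r μ i l := by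
  have hA := congrArg (PowerSeries.coeff r) (claimA μ i y)
  rw [map_sum, map_add, PowerSeries.coeff_smul, PowerSeries.coeff_smul, map_sum] at hA
  rw [coeff_psi_eq_zero hr hμ i, smul_zero, zero_add] at hA
  rw [Finset.sum_congr rfl (fun j _ => by
      rw [PowerSeries.coeff_smul, coeff_pdS] :
      ∀ j ∈ Finset.univ, PowerSeries.coeff r (y j • pdS j (Qser n μ i))
        = y j • pderiv j (PowerSeries.coeff r (Qser n μ i)))] at hA
  rw [hA]
  congr 1

/-- Sum of the jackVectors is zero. -/
lemma sum_jack_eq_zero {r : ℕ} (hr : 0 < r) {μ : ℂ} (hμ0 : μ ≠ 0) (hμ : μ * n = r) :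
    ∑ i, PowerSeries.coeff r (Qser n μ i) = 0 := by
  have hC := congrArg (PowerSeries.coeff (r + 1)) (claimC (n := n) μ)
  rw [PowerSeries.coeff_smul, map_sub, PowerSeries.coeff_smul] at hC
  have e1 : (PowerSeries.X * Pser n μ) * ∑ j, Sser n j
      = PowerSeries.X * ∑ j : Fin n, Qser n μ j := by
    rw [Finset.mul_sum, Finset.mul_sum]
    exact Finset.sum_congr rfl fun j _ => by rw [Qser]; ring
  rw [e1, PowerSeries.coeff_succ_X_mul, PowerSeries.coeff_succ_X_mul, map_sum] at hC
  have e2 : PowerSeries.coeff (r+1) (PowerSeries.X * ∑ j, PowerSeries.C (X j) * pdS j (Pser n μ)) = (r : ℕ) • PowerSeries.coeff r (Pser n μ) := by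
    rw [PowerSeries.coeff_succ_X_mul, map_sum,
      Finset.sum_congr rfl (fun j _ => by
        rw [PowerSeries.coeff_C_mul, coeff_pdS] :
        ∀ j ∈ Finset.univ, PowerSeries.coeff r (PowerSeries.C (X j) * pdS j (Pser n μ))
          = X j * pderiv j (PowerSeries.coeff r (Pser n μ)))]
    exact euler_identity (homCoeffs_P μ r)
  rw [e2, hμ, ← Nat.cast_smul_eq_nsmul ℂ, sub_self] at hC
  exact (smul_eq_zero.mp hC).resolve_left hμ0

lemma S_sub (i l : Fin n) :
    Sser n i - Sser n l
      = PowerSeries.C (X i - X l) * (PowerSeries.X * (Sser n i * Sser n l)) := by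
  calc Sser n i - Sser n l
      = (user n l * Sser n l) * Sser n i - (user n i * Sser n i) * Sser n l := by
        rw [uS, uS]; ring
    _ = (user n l - user n i) * (Sser n i * Sser n l) := by ring
    _ = _ := by
        unfold user
        rw [map_sub]
        ring

lemma QsubQ (μ : ℂ) (i l : Fin n) :
    Qser n μ i - Qser n μ l
      = PowerSeries.C (X i - X l) * (PowerSeries.X * (Pser n μ * Sser n i * Sser n l)) := by
  rw [Qser, Qser, ← mul_sub, S_sub]
  ring

lemma map_ren_S (e : Fin n → Fin n) (i : Fin n) :
    PowerSeries.map (rename e).toRingHom (Sser n i) = Sser n (e i) := by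
  refine PowerSeries.ext fun k => ?_
  simp [Sser, PowerSeries.coeff_map]

lemma map_ren_B (μ : ℂ) (e : Fin n → Fin n) (j : Fin n) :
    PowerSeries.map (rename e).toRingHom (Bser n μ j) = Bser n μ (e j) := by
  refine PowerSeries.ext fun k => ?_
  simp [Bser, PowerSeries.coeff_map]

lemma map_ren_P (μ : ℂ) (e : Fin n ≃ Fin n) :
    PowerSeries.map (rename (⇑e)).toRingHom (Pser n μ) = Pser n μ := by
  rw [Pser, map_prod, Finset.prod_congr rfl fun j _ => map_ren_B μ (⇑e) j]
  exact Equiv.prod_comp e fun j => Bser n μ j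

lemma rename_coeffQ (μ : ℂ) (r : ℕ) (e : Fin n ≃ Fin n) (i : Fin n) :
    rename (⇑e) (PowerSeries.coeff r (Qser n μ i))
      = PowerSeries.coeff r (Qser n μ (e i)) := by
  have h0 : rename (⇑e) (PowerSeries.coeff r (Qser n μ i))
      = PowerSeries.coeff r (PowerSeries.map (rename (⇑e)).toRingHom (Qser n μ i)) :=
    (PowerSeries.coeff_map _ _ _).symm
  rw [h0, Qser, map_mul, map_ren_P, map_ren_S]
  rfl

lemma rename_jack_of_ne {r : ℕ} {a b i : Fin n} (ha : i ≠ a) (hb : i ≠ b) :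
    rename (⇑(Equiv.swap a b)) (jackVector n r i) = jackVector n r i := by
  rw [jackVector_eq, rename_coeffQ, Equiv.swap_apply_of_ne_of_ne ha hb]

lemma jack_sub_swap {r : ℕ} {i l : Fin n} (hl : i ≠ l) :
    jackVector n r i - rename (⇑(Equiv.swap i l)) (jackVector n r i)
      = (X i - X l) * hpol n r ((r : ℂ) / (n : ℂ)) i l := by
  rw [jackVector_eq, rename_coeffQ, Equiv.swap_apply_left, ← map_sub, QsubQ,
    PowerSeries.coeff_C_mul, hpol]

lemma jack_ne_zero {r : ℕ} (hn : n ≠ 0) (hnr : ¬ n ∣ r) (i : Fin n) :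
    jackVector n r i ≠ 0 := by
  set μ : ℂ := (r : ℂ) / (n : ℂ) with hμ
  set b : Fin n → ℂ := fun l => if l = i then 1 else 0 with hb
  have hmapS : PowerSeries.map (eval b) (Sser n i) = PowerSeries.mk fun _ => (1 : ℂ) := by
    refine PowerSeries.ext fun k => ?_
    simp [Sser, PowerSeries.coeff_map, hb]
  have hmapB : ∀ j : Fin n, PowerSeries.map (eval b) (Bser n μ j)
      = if j = i then (PowerSeries.mk fun k => (-1 : ℂ) ^ k * genBinom μ k) else 1 := by
    intro j
    split_ifs with h
    · subst h
      refine PowerSeries.ext fun k => ?_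
      simp [Bser, PowerSeries.coeff_map, hb]
    · refine PowerSeries.ext fun k => ?_
      rcases k with _ | k
      · simp [Bser, PowerSeries.coeff_map, hb, genBinom_zero]
      · simp [Bser, PowerSeries.coeff_map, hb, h, PowerSeries.coeff_one]
  have hmapP : PowerSeries.map (eval b) (Pser n μ)
      = PowerSeries.mk fun k => (-1 : ℂ) ^ k * genBinom μ k := by
    rw [Pser, map_prod, Finset.prod_congr rfl fun j _ => hmapB j,
      Finset.prod_ite_eq' Finset.univ i, if_pos (Finset.mem_univ i)]
  have hval : eval b (jackVector n r i)
      = ∑ k ∈ Finset.range (r + 1), (-1 : ℂ) ^ k * genBinom μ k := by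
    rw [jackVector_eq, show eval b (PowerSeries.coeff r (Qser n μ i))
        = PowerSeries.coeff r (PowerSeries.map (eval b) (Qser n μ i))
      from (PowerSeries.coeff_map _ _ _).symm, Qser, map_mul, hmapP, hmapS,
      PowerSeries.coeff_mul]
    simp only [PowerSeries.coeff_mk, mul_one]
    rw [Finset.Nat.sum_antidiagonal_eq_sum_range_succ
      (fun a _ => (-1 : ℂ) ^ a * genBinom μ a)]
  have hval2 : eval b (jackVector n r i) = (-1) ^ r * genBinom (μ - 1) r := by
    rw [hval, genBinom_altsum]
  intro h0
  have := genBinom_ne_zero hn hnr (r := r)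
  rw [h0, map_zero] at hval2
  exact this (by
    have h1 : ((-1 : ℂ)) ^ r ≠ 0 := pow_ne_zero _ (by norm_num)
    field_simp at hval2
    exact (mul_eq_zero.mp hval2.symm).resolve_left h1)

lemma X_sub_ne_zero {i l : Fin n} (h : i ≠ l) :
    (X i - X l : MvPolynomial (Fin n) ℂ) ≠ 0 := by
  intro h0
  have h1 := congrArg (coeff (Finsupp.single i 1)) h0
  rw [coeff_zero, coeff_sub, coeff_X', coeff_X', if_pos rfl,
    if_neg (by simp [Finsupp.single_eq_single_iff, h.symm])] at h1
  norm_num at h1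

lemma pairSum {M : Type*} [AddCommGroup M] (i : Fin n) (g : Fin n → M) (hg : g i = 0) :
    ∑ q ∈ Finset.univ.filter (fun q : Fin n × Fin n => q.1 < q.2),
      (if q.1 = i then g q.2 else if q.2 = i then g q.1 else 0) = ∑ l, g l := by
  rw [Finset.sum_filter, Fintype.sum_prod_type]
  have step : ∀ j l : Fin n,
      (if j < l then (if j = i then g l else if l = i then g j else 0) else 0)
      = (if j = i then (if i < l then g l else 0) else 0)
        + (if l = i then (if j < i then g j else 0) else 0) := by
    intro j l
    split_ifs <;> first | rfl | simp_all
  simp only [step]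
  rw [Finset.sum_congr rfl fun j _ => Finset.sum_add_distrib, Finset.sum_add_distrib]
  have s1 : (∑ j : Fin n, ∑ l : Fin n, (if j = i then (if i < l then g l else 0) else 0))
      = ∑ l, if i < l then g l else 0 := by
    rw [Finset.sum_congr rfl (fun j _ => by
        split_ifs with h
        · rfl
        · exact Finset.sum_const_zero :
      ∀ j ∈ Finset.univ, (∑ l : Fin n, (if j = i then (if i < l then g l else 0) else 0))
        = if j = i then (∑ l : Fin n, if i < l then g l else 0) else 0)]
    rw [Finset.sum_ite_eq' Finset.univ i, if_pos (Finset.mem_univ i)]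
  have s2 : (∑ j : Fin n, ∑ l : Fin n, (if l = i then (if j < i then g j else 0) else 0))
      = ∑ j : Fin n, if j < i then g j else 0 := by
    refine Finset.sum_congr rfl fun j _ => ?_
    rw [Finset.sum_ite_eq' Finset.univ i, if_pos (Finset.mem_univ i)]
  rw [s1, s2, ← Finset.sum_add_distrib]
  refine Finset.sum_congr rfl fun l _ => ?_
  rcases lt_trichotomy i l with h | h | h
  · rw [if_pos h, if_neg (asymm h), add_zero]
  · subst h; simp [hg]
  · rw [if_neg (asymm h), if_pos h, zero_add]

end DunklAux

/-- **C. Dunkl.**  Let `n ≥ 2` and let `r` be a positive integer not divisible by `n`; set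
`c = r/n`.  The polynomials `fᵢ = jackVector n r i` are nonzero and homogeneous of degree
`r`, satisfy `Σᵢ fᵢ = 0`, and are singular vectors for the type `A` Dunkl operators with
parameter `c`: for every `y ∈ ℂⁿ` with `Σᵢ yᵢ = 0`, `D_y fᵢ = 0` (an identity in the
fraction field `K` of `ℂ[x₁,…,xₙ]`), where
`D_y f = Σⱼ yⱼ ∂f/∂xⱼ − c Σ_{j<l} ((yⱼ−y_l)/(xⱼ−x_l))(f − s_{jl}·f)`. -/
theorem dunkl_singular_vectors (n r : ℕ) (hn : 2 ≤ n) (hr : 0 < r) (hnr : ¬ n ∣ r)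
    (K : Type) [Field K] [Algebra ℂ K]
    [Algebra (MvPolynomial (Fin n) ℂ) K] [IsScalarTower ℂ (MvPolynomial (Fin n) ℂ) K]
    [IsFractionRing (MvPolynomial (Fin n) ℂ) K] :
    (∀ i : Fin n, (jackVector n r i).IsHomogeneous r ∧ jackVector n r i ≠ 0) ∧
    (∑ i : Fin n, jackVector n r i = 0) ∧
    (∀ y : Fin n → ℂ, (∑ i : Fin n, y i) = 0 → ∀ i : Fin n,
      algebraMap (MvPolynomial (Fin n) ℂ) K
          (∑ j : Fin n, MvPolynomial.C (y j) * MvPolynomial.pderiv j (jackVector n r i))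
        - algebraMap ℂ K ((r : ℂ) / (n : ℂ)) *
            ∑ q ∈ Finset.univ.filter (fun q : Fin n × Fin n => q.1 < q.2),
              algebraMap ℂ K (y q.1 - y q.2) *
                (algebraMap (MvPolynomial (Fin n) ℂ) K
                    (jackVector n r i
                      - MvPolynomial.rename (Equiv.swap q.1 q.2) (jackVector n r i)) /
                  algebraMap (MvPolynomial (Fin n) ℂ) K
                    (MvPolynomial.X q.1 - MvPolynomial.X q.2))
      = 0) := by
  have hn0 : (n : ℂ) ≠ 0 := Nat.cast_ne_zero.mpr (by omega)
  have hr0 : (r : ℂ) ≠ 0 := Nat.cast_ne_zero.mpr (by omega)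
  have hμ : ((r : ℂ) / (n : ℂ)) * n = r := div_mul_cancel₀ _ hn0
  have hμ0 : ((r : ℂ) / (n : ℂ)) ≠ 0 := div_ne_zero hr0 hn0
  refine ⟨fun i => ⟨?_, ?_⟩, ?_, ?_⟩
  · rw [DunklAux.jackVector_eq]
    exact DunklAux.homCoeffs_Q _ i r
  · exact DunklAux.jack_ne_zero (by omega) hnr i
  · simp only [DunklAux.jackVector_eq]
    exact DunklAux.sum_jack_eq_zero hr hμ0 hμ
  · intro y hy i
    set μ : ℂ := (r : ℂ) / (n : ℂ) with hμdef
    set A := algebraMap (MvPolynomial (Fin n) ℂ) K with hA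
    have hCz : ∀ z : ℂ, algebraMap ℂ K z = A (C z) := fun z => by
      rw [hA, IsScalarTower.algebraMap_apply ℂ (MvPolynomial (Fin n) ℂ) K,
        MvPolynomial.algebraMap_eq]
    have hAinj : Function.Injective A := IsFractionRing.injective _ _
    have hmain : ∑ j, C (y j) * pderiv j (jackVector n r i)
        = C μ * ∑ l, C (y i - y l) * DunklAux.hpol n r μ i l := by
      calc ∑ j, C (y j) * pderiv j (jackVector n r i)
          = ∑ j, y j • pderiv j (PowerSeries.coeff r (DunklAux.Qser n μ i)) := by
            rw [DunklAux.jackVector_eq]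
            exact Finset.sum_congr rfl fun j _ => (MvPolynomial.smul_eq_C_mul _ _).symm
        _ = μ • ∑ l, (y i - y l) • DunklAux.hpol n r μ i l :=
            DunklAux.main_identity (n := n) hr hμ i y
        _ = C μ * ∑ l, C (y i - y l) * DunklAux.hpol n r μ i l := by
            rw [MvPolynomial.smul_eq_C_mul]
            congr 1
            exact Finset.sum_congr rfl fun l _ => MvPolynomial.smul_eq_C_mul _ _
    set g : Fin n → K := fun l =>
      algebraMap ℂ K (y i - y l) * A (DunklAux.hpol n r μ i l) with hgdef
    have hgz : g i = 0 := by simp [hgdef]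
    have hpair : ∑ q ∈ Finset.univ.filter (fun q : Fin n × Fin n => q.1 < q.2),
        algebraMap ℂ K (y q.1 - y q.2) *
          (A (jackVector n r i - rename (⇑(Equiv.swap q.1 q.2)) (jackVector n r i)) /
            A (X q.1 - X q.2))
        = ∑ l, g l := by
      rw [← DunklAux.pairSum i g hgz]
      refine Finset.sum_congr rfl fun q hq => ?_
      have hlt : q.1 < q.2 := (Finset.mem_filter.mp hq).2
      have hne : q.1 ≠ q.2 := ne_of_lt hlt
      have hXne : ∀ (a b : Fin n), a ≠ b → A (X a - X b) ≠ 0 := fun a b hab h0 =>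
        DunklAux.X_sub_ne_zero hab (hAinj (h0.trans (map_zero A).symm))
      by_cases h1 : q.1 = i
      · rw [if_pos h1]
        subst h1
        rw [DunklAux.jack_sub_swap hne, map_mul,
          mul_div_cancel_left₀ _ (hXne _ _ hne)]
      · rw [if_neg h1]
        by_cases h2 : q.2 = i
        · rw [if_pos h2]
          subst h2
          rw [Equiv.swap_comm, DunklAux.jack_sub_swap (Ne.symm hne),
            show (X q.2 - X q.1 : MvPolynomial (Fin n) ℂ) * DunklAux.hpol n r μ q.2 q.1
              = -((X q.1 - X q.2) * DunklAux.hpol n r μ q.2 q.1) from by ring,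
            map_neg, map_mul, neg_div,
            mul_div_cancel_left₀ _ (hXne _ _ hne),
            show y q.1 - y q.2 = -(y q.2 - y q.1) from by ring, map_neg]
          simp only [hgdef, hμdef]
          ring
        · rw [if_neg h2, DunklAux.rename_jack_of_ne (Ne.symm h1) (Ne.symm h2), sub_self,
            map_zero, zero_div, mul_zero]
    have hsum : (∑ l, A (C (y i - y l) * DunklAux.hpol n r μ i l)) = ∑ l, g l :=
      Finset.sum_congr rfl fun l _ => by
        simp only [hgdef]
        rw [map_mul, ← hCz]
    rw [hpair, hmain, map_mul, map_sum, hsum, ← hCz]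
    exact sub_self _
end

section
/- Let X, Y ∈ Mat_n(ℂ) be such that rank(XY − YX + I) = 1. Then the pair (X, Y) is irreducible: the only linear subspaces W ⊆ ℂ^n invariant under both X and Y are W = 0 and W = ℂ^n. Consequently (by Schur's lemma), any matrix B ∈ Mat_n(ℂ) commuting with both X and Y is a scalar multiple of the identity, i.e. PGL_n(ℂ) acts freely on the set of such pairs. -/
open Matrix

/-- A rank-one matrix is an outer product of two vectors. -/
lemma cm_rank_one_decomp {n : ℕ} (T : Matrix (Fin n) (Fin n) ℂ) (h : T.rank = 1) :
    ∃ a b : Fin n → ℂ, T = Matrix.vecMulVec a b := by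
  rw [Matrix.rank] at h
  obtain ⟨v, hv0, hv⟩ := finrank_eq_one_iff'.mp h
  choose c hc using hv
  refine ⟨(v : Fin n → ℂ),
    fun j => c ⟨T.mulVec (Pi.single j 1), ⟨Pi.single j 1, by simp [Matrix.mulVecLin_apply]⟩⟩, ?_⟩
  ext i j
  have h2 := congrFun (congrArg Subtype.val
    (hc ⟨T.mulVec (Pi.single j 1), ⟨Pi.single j 1, by simp [Matrix.mulVecLin_apply]⟩⟩)) i
  simp only [Submodule.coe_smul, Pi.smul_apply, smul_eq_mul] at h2
  have h3 : T.mulVec (Pi.single j 1) i = T i j := by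
    simp [Matrix.mulVec_single]
  rw [Matrix.vecMulVec_apply, mul_comm, ← h3, ← h2]

/-- The key trace argument: if `[X,Y] + 1` is the outer product `a bᵀ` and `W` is a nonzero
subspace invariant under `X` and `Y`, then `b` does not annihilate `W`. -/
lemma cm_step {n : ℕ} (X Y : Matrix (Fin n) (Fin n) ℂ) (a b : Fin n → ℂ)
    (hT : X * Y - Y * X + 1 = Matrix.vecMulVec a b)
    (W : Submodule ℂ (Fin n → ℂ)) (hX : ∀ v ∈ W, X.mulVec v ∈ W)
    (hY : ∀ v ∈ W, Y.mulVec v ∈ W) (hW : W ≠ ⊥) :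
    ∃ w ∈ W, b ⬝ᵥ w ≠ 0 := by
  by_contra hcon
  push_neg at hcon
  have hX' : ∀ v ∈ W, X.mulVecLin v ∈ W := by
    intro v hv; simpa [Matrix.mulVecLin_apply] using hX v hv
  have hY' : ∀ v ∈ W, Y.mulVecLin v ∈ W := by
    intro v hv; simpa [Matrix.mulVecLin_apply] using hY v hv
  set f : W →ₗ[ℂ] W := (X.mulVecLin).restrict hX' with hf
  set g : W →ₗ[ℂ] W := (Y.mulVecLin).restrict hY' with hg
  have key : ∀ w ∈ W, (X * Y - Y * X).mulVec w = -w := by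
    intro w hw
    have h1 : (X * Y - Y * X + 1).mulVec w = (b ⬝ᵥ w) • a := by
      rw [hT]
      ext i
      simp only [Matrix.mulVec, dotProduct, Matrix.vecMulVec_apply, Pi.smul_apply,
        smul_eq_mul, Finset.sum_mul]
      exact Finset.sum_congr rfl fun x _ => by ring
    have h2 : (X * Y - Y * X + 1).mulVec w = (X * Y - Y * X).mulVec w + w := by
      rw [Matrix.add_mulVec, Matrix.one_mulVec]
    rw [hcon w hw, zero_smul] at h1
    exact eq_neg_of_add_eq_zero_left (h2.symm.trans h1)
  have hcomm : f * g - g * f = -(1 : W →ₗ[ℂ] W) := by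
    refine LinearMap.ext fun w => Subtype.ext ?_
    have hw := w.2
    have : X.mulVec (Y.mulVec (w : Fin n → ℂ)) - Y.mulVec (X.mulVec (w : Fin n → ℂ))
        = -(w : Fin n → ℂ) := by
      have := key w hw
      rwa [Matrix.sub_mulVec, ← Matrix.mulVec_mulVec, ← Matrix.mulVec_mulVec] at this
    simpa [hf, hg, LinearMap.sub_apply, Module.End.mul_apply, LinearMap.restrict_apply,
      Matrix.mulVecLin_apply, LinearMap.neg_apply, Module.End.one_apply] using this
  have htr := congrArg (LinearMap.trace ℂ W) hcomm
  rw [(LinearMap.trace ℂ W).map_sub (f * g) (g * f), LinearMap.trace_mul_comm ℂ f g, sub_self,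
    (LinearMap.trace ℂ W).map_neg (1 : W →ₗ[ℂ] W), LinearMap.trace_one] at htr
  have hfr : Module.finrank ℂ W ≠ 0 := by
    intro h0
    exact hW (Submodule.finrank_eq_zero.mp h0)
  have : (Module.finrank ℂ W : ℂ) ≠ 0 := Nat.cast_ne_zero.mpr hfr
  exact this (neg_eq_zero.mp htr.symm)

/-- The annihilator of `W` with respect to the dot product. -/
noncomputable def cmPerp {n : ℕ} (W : Submodule ℂ (Fin n → ℂ)) : Submodule ℂ (Fin n → ℂ) where
  carrier := {u | ∀ w ∈ W, u ⬝ᵥ w = 0}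
  add_mem' := by
    intro x y hx hy w hw
    simp [add_dotProduct, hx w hw, hy w hw]
  zero_mem' := by intro w hw; simp
  smul_mem' := by
    intro c x hx w hw
    simp [smul_dotProduct, hx w hw]

/-- If `X, Y` are `n × n` complex matrices such that `rank(XY − YX + I) = 1`, then the pair
`(X, Y)` is irreducible: the only subspaces of `ℂⁿ` invariant under both `X` and `Y` are `0`
and `ℂⁿ`.  Consequently (Schur's lemma), any matrix commuting with both `X` and `Y` is a
scalar, i.e. `PGL_n(ℂ)` acts freely on the set of such pairs. -/
theorem calogero_moser_pair_irreducible (n : ℕ) (X Y : Matrix (Fin n) (Fin n) ℂ)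
    (h : Matrix.rank (X * Y - Y * X + 1) = 1) :
    (∀ W : Submodule ℂ (Fin n → ℂ),
        (∀ v ∈ W, X.mulVec v ∈ W) → (∀ v ∈ W, Y.mulVec v ∈ W) → W = ⊥ ∨ W = ⊤) ∧
    (∀ B : Matrix (Fin n) (Fin n) ℂ,
        B * X = X * B → B * Y = Y * B → ∃ c : ℂ, B = c • (1 : Matrix (Fin n) (Fin n) ℂ)) := by
  obtain ⟨a, b, hT⟩ := cm_rank_one_decomp _ h
  have part1 : ∀ W : Submodule ℂ (Fin n → ℂ),
      (∀ v ∈ W, X.mulVec v ∈ W) → (∀ v ∈ W, Y.mulVec v ∈ W) → W = ⊥ ∨ W = ⊤ := by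
    intro W hX hY
    by_contra hcon
    push_neg at hcon
    obtain ⟨hWbot, hWtop⟩ := hcon
    -- Step 1: b does not annihilate W
    obtain ⟨w, hw, hbw⟩ := cm_step X Y a b hT W hX hY hWbot
    -- Step 2: the perp of W
    set W' := cmPerp W with hW'def
    have hmem : ∀ u, u ∈ W' ↔ ∀ v ∈ W, u ⬝ᵥ v = 0 := fun u => Iff.rfl
    -- W' is nonzero
    have hW'bot : W' ≠ ⊥ := by
      obtain ⟨φ, hφ0, hφ⟩ := Submodule.exists_dual_map_eq_bot_of_lt_top
        (lt_top_iff_ne_top.mpr hWtop) inferInstance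
      set u : Fin n → ℂ := fun i => φ (Pi.single i 1) with hu
      have hrep : ∀ v : Fin n → ℂ, φ v = u ⬝ᵥ v := by
        intro v
        have hv : v = ∑ i, v i • (Pi.single i (1 : ℂ) : Fin n → ℂ) := by
          ext j
          simp [Pi.single_apply, Finset.sum_apply, Finset.sum_ite_eq, Finset.sum_ite_eq']
        calc φ v = φ (∑ i, v i • (Pi.single i (1 : ℂ) : Fin n → ℂ)) := by rw [← hv]
          _ = ∑ i, v i * φ (Pi.single i 1) := by
              rw [map_sum]; exact Finset.sum_congr rfl fun i _ => by simp
          _ = u ⬝ᵥ v := by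
              rw [dotProduct]
              exact Finset.sum_congr rfl fun i _ => mul_comm _ _
      have huW' : u ∈ W' := by
        intro v hv
        rw [← hrep]
        have : φ v ∈ W.map φ := Submodule.mem_map_of_mem hv
        rw [hφ] at this
        simpa using this
      have hu0 : u ≠ 0 := by
        intro h0
        apply hφ0
        refine LinearMap.ext fun v => ?_
        rw [hrep v, h0]
        simp
      intro hbot
      rw [hbot] at huW'
      exact hu0 (by simpa using huW')
    -- W' is invariant under Xᵀ and Yᵀ
    have hkey : ∀ (M : Matrix (Fin n) (Fin n) ℂ), (∀ v ∈ W, M.mulVec v ∈ W) →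
        ∀ u ∈ W', Mᵀ.mulVec u ∈ W' := by
      intro M hM u hu v hv
      have : Mᵀ.mulVec u ⬝ᵥ v = u ⬝ᵥ M.mulVec v := by
        rw [Matrix.mulVec_transpose, ← Matrix.dotProduct_mulVec]
      rw [this]
      exact hu _ (hM v hv)
    -- transposed commutator relation
    have hT' : Yᵀ * Xᵀ - Xᵀ * Yᵀ + 1 = Matrix.vecMulVec b a := by
      have := congrArg Matrix.transpose hT
      rw [Matrix.transpose_add, Matrix.transpose_sub, Matrix.transpose_mul,
        Matrix.transpose_mul, Matrix.transpose_one] at this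
      rw [this]
      ext i j
      simp [Matrix.vecMulVec_apply, mul_comm]
    obtain ⟨u, hu, hau⟩ := cm_step Yᵀ Xᵀ b a hT' W'
      (hkey Y hY) (hkey X hX) hW'bot
    -- b ∈ W'
    have hbW' : b ∈ W' := by
      have h1 : (Yᵀ * Xᵀ - Xᵀ * Yᵀ + 1).mulVec u = (a ⬝ᵥ u) • b := by
        rw [hT']
        ext i
        simp only [Matrix.mulVec, dotProduct, Matrix.vecMulVec_apply, Pi.smul_apply,
          smul_eq_mul, Finset.sum_mul]
        exact Finset.sum_congr rfl fun x _ => by ring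
      have h2 : (Yᵀ * Xᵀ - Xᵀ * Yᵀ + 1).mulVec u
          = Yᵀ.mulVec (Xᵀ.mulVec u) - Xᵀ.mulVec (Yᵀ.mulVec u) + u := by
        rw [Matrix.add_mulVec, Matrix.one_mulVec, Matrix.sub_mulVec,
          Matrix.mulVec_mulVec, Matrix.mulVec_mulVec]
      have hmemW' : (a ⬝ᵥ u) • b ∈ W' := by
        rw [← h1, h2]
        exact W'.add_mem (W'.sub_mem (hkey Y hY _ (hkey X hX u hu))
          (hkey X hX _ (hkey Y hY u hu))) hu
      have := W'.smul_mem (a ⬝ᵥ u)⁻¹ hmemW'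
      rwa [smul_smul, inv_mul_cancel₀ hau, one_smul] at this
    exact hbw (hbW' w hw)
  refine ⟨part1, ?_⟩
  -- Schur's lemma part
  intro B hBX hBY
  have hn : n ≠ 0 := by
    intro h0
    subst h0
    have : (X * Y - Y * X + 1 : Matrix (Fin 0) (Fin 0) ℂ).rank ≤ 0 := by
      simpa using Matrix.rank_le_card_width (X * Y - Y * X + 1)
    omega
  haveI : NeZero n := ⟨hn⟩
  haveI : Nontrivial (Fin n → ℂ) := by
    refine ⟨Pi.single ⟨0, Nat.pos_of_ne_zero hn⟩ 1, 0, ?_⟩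
    intro h0
    have := congrFun h0 ⟨0, Nat.pos_of_ne_zero hn⟩
    simp at this
  obtain ⟨c, hc⟩ := Module.End.exists_eigenvalue (B.mulVecLin)
  refine ⟨c, ?_⟩
  set W := Module.End.eigenspace B.mulVecLin c with hWdef
  have hWbot : W ≠ ⊥ := hc
  have hinv : ∀ (M : Matrix (Fin n) (Fin n) ℂ), B * M = M * B → ∀ v ∈ W, M.mulVec v ∈ W := by
    intro M hM v hv
    rw [hWdef, Module.End.mem_eigenspace_iff] at hv ⊢
    rw [Matrix.mulVecLin_apply] at hv ⊢
    rw [Matrix.mulVec_mulVec, hM, ← Matrix.mulVec_mulVec, hv, Matrix.mulVec_smul]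
  have hWtop : W = ⊤ := by
    rcases part1 W (hinv X hBX) (hinv Y hBY) with h1 | h1
    · exact absurd h1 hWbot
    · exact h1
  have hall : ∀ v : Fin n → ℂ, B.mulVec v = c • v := by
    intro v
    have hv : v ∈ W := hWtop ▸ Submodule.mem_top
    rw [hWdef, Module.End.mem_eigenspace_iff, Matrix.mulVecLin_apply] at hv
    exact hv
  ext i j
  have := congrFun (hall (Pi.single j 1)) i
  rw [Matrix.mulVec_single] at this
  simp only [MulOpposite.op_one, one_smul, Matrix.col_apply] at this
  rw [this]
  simp [Matrix.one_apply, Pi.single_apply, eq_comm]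
end

section
/- Let A, B ∈ Mat_n(ℂ) be square matrices such that the commutator AB − BA has rank at most 1. Then A and B are simultaneously triangularizable: there exists an invertible matrix P ∈ GL_n(ℂ) such that both P^{−1}AP and P^{−1}BP are upper triangular. -/
open FiniteDimensional Module Submodule

lemma rank_comm_restrict_le {V : Type} [AddCommGroup V] [Module ℂ V] [FiniteDimensional ℂ V]
    (f g : V →ₗ[ℂ] V) (W : Submodule ℂ V) (hf : ∀ x ∈ W, f x ∈ W) (hg : ∀ x ∈ W, g x ∈ W) :
    finrank ℂ (LinearMap.range (f.restrict hf ∘ₗ g.restrict hg - g.restrict hg ∘ₗ f.restrict hf))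
      ≤ finrank ℂ (LinearMap.range (f ∘ₗ g - g ∘ₗ f)) := by
  set c' := f.restrict hf ∘ₗ g.restrict hg - g.restrict hg ∘ₗ f.restrict hf
  have key : (LinearMap.range c').map W.subtype ≤ LinearMap.range (f ∘ₗ g - g ∘ₗ f) := by
    rintro x ⟨y, ⟨z, rfl⟩, rfl⟩
    exact ⟨z, by simp [c', LinearMap.restrict_apply]⟩
  calc finrank ℂ (LinearMap.range c')
      = finrank ℂ ((LinearMap.range c').map W.subtype) :=
        (Submodule.equivMapOfInjective _ W.injective_subtype _).finrank_eq
    _ ≤ _ := Submodule.finrank_mono key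

/-- Common eigenvector lemma. -/
lemma exists_common_eigenvector : ∀ (n : ℕ) (V : Type) [AddCommGroup V] [Module ℂ V]
    [FiniteDimensional ℂ V], finrank ℂ V ≤ n → 0 < finrank ℂ V →
    ∀ f g : V →ₗ[ℂ] V,
    finrank ℂ (LinearMap.range (f ∘ₗ g - g ∘ₗ f)) ≤ 1 →
    ∃ (v : V) (a b : ℂ), v ≠ 0 ∧ f v = a • v ∧ g v = b • v := by
  intro n
  induction n with
  | zero => intro V _ _ _ h1 h2; omega
  | succ n IH =>
    intro V _ _ _ hle hpos f g hrank
    have : Nontrivial V := Module.nontrivial_of_finrank_pos hpos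
    obtain ⟨a, ha⟩ := Module.End.exists_eigenvalue (f : Module.End ℂ V)
    set E := Module.End.eigenspace (f : Module.End ℂ V) a with hE
    by_cases hInv : ∀ x ∈ E, g x ∈ E
    · -- restrict g to E
      have hEnt : Nontrivial E := by
        rw [Submodule.nontrivial_iff_ne_bot]
        exact ha
      obtain ⟨b, hb⟩ := Module.End.exists_eigenvalue ((g.restrict hInv : E →ₗ[ℂ] E) : Module.End ℂ E)
      obtain ⟨w, hw, hw0⟩ := hb.exists_hasEigenvector
      have hw' : g.restrict hInv w = b • w := Module.End.mem_eigenspace_iff.mp hw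
      refine ⟨(w : V), a, b, by simpa using hw0, ?_, ?_⟩
      · exact (Module.End.mem_eigenspace_iff.mp w.2)
      · have := congrArg (Subtype.val) hw'
        simpa [LinearMap.restrict_apply] using this
    · push_neg at hInv
      obtain ⟨x, hxE, hgx⟩ := hInv
      set c := f ∘ₗ g - g ∘ₗ f with hc
      set φ : V →ₗ[ℂ] V := f - a • LinearMap.id with hφ
      set W := LinearMap.range φ with hW
      have hfx : f x = a • x := Module.End.mem_eigenspace_iff.mp hxE
      have hmemE : ∀ y : V, f y = a • y ↔ y ∈ E := fun y =>
        (Module.End.mem_eigenspace_iff (f := f)).symm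
      have hcx : c x = φ (g x) := by
        simp [hc, hφ, hfx, map_smul, LinearMap.sub_apply, LinearMap.smul_apply]
      have hcx0 : c x ≠ 0 := by
        rw [hcx]
        intro h0
        apply hgx
        rw [← hmemE]
        have : f (g x) - a • (g x) = 0 := by simpa [hφ] using h0
        rw [sub_eq_zero] at this; exact this
      -- range c = span {c x} ≤ W
      have hrangec : LinearMap.range c ≤ W := by
        have h1 : (ℂ ∙ (c x)) ≤ LinearMap.range c := by
          rw [Submodule.span_singleton_le_iff_mem]; exact ⟨x, rfl⟩
        have h2 : LinearMap.range c = ℂ ∙ (c x) := by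
          refine (Submodule.eq_of_le_of_finrank_le h1 ?_).symm
          rw [finrank_span_singleton hcx0]; exact hrank
        rw [h2, Submodule.span_singleton_le_iff_mem, hcx]
        exact ⟨g x, rfl⟩
      -- W invariant under f and g
      have hfW : ∀ y ∈ W, f y ∈ W := by
        rintro y ⟨z, rfl⟩
        refine ⟨f z, ?_⟩
        simp [hφ, LinearMap.sub_apply, LinearMap.smul_apply, map_sub, map_smul]
      have hgW : ∀ y ∈ W, g y ∈ W := by
        rintro y ⟨z, rfl⟩
        have key : g (φ z) = φ (g z) - c z := by
          simp [hφ, hc, LinearMap.sub_apply, LinearMap.smul_apply, map_sub, map_smul]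
        rw [key]
        exact W.sub_mem ⟨g z, rfl⟩ (hrangec ⟨z, rfl⟩)
      -- dim W < dim V
      have hker : Module.End.eigenspace (f : Module.End ℂ V) a = LinearMap.ker φ := by
        ext y
        rw [Module.End.mem_eigenspace_iff, LinearMap.mem_ker]
        constructor
        · intro hy; simp [hφ, hy, LinearMap.sub_apply]
        · intro hy
          have : f y - a • y = 0 := by simpa [hφ] using hy
          rw [sub_eq_zero] at this; exact this
      have hkerpos : 0 < finrank ℂ (LinearMap.ker φ) := by
        rw [← hker]
        have : Nontrivial (Module.End.eigenspace (f : Module.End ℂ V) a) := by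
          rw [Submodule.nontrivial_iff_ne_bot]; exact ha
        exact finrank_pos
      have hWlt : finrank ℂ W < finrank ℂ V := by
        have h1 := φ.finrank_range_add_finrank_ker
        have h2 : finrank ℂ W = finrank ℂ (LinearMap.range φ) := rfl
        omega
      by_cases hW0 : finrank ℂ W = 0
      · -- W = ⊥, f = a • id, take eigenvector of g
        have hWbot : W = ⊥ := Submodule.finrank_eq_zero.mp hW0
        obtain ⟨b, hb⟩ := Module.End.exists_eigenvalue (g : Module.End ℂ V)
        obtain ⟨w, hw, hw0⟩ := hb.exists_hasEigenvector
        refine ⟨w, a, b, hw0, ?_, Module.End.mem_eigenspace_iff.mp hw⟩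
        have : φ w ∈ W := ⟨w, rfl⟩
        rw [hWbot, Submodule.mem_bot] at this
        have : f w - a • w = 0 := by simpa [hφ] using this
        rw [sub_eq_zero] at this; exact this
      · -- induct on W
        have hrank' := rank_comm_restrict_le f g W hfW hgW
        obtain ⟨v, a', b', hv0, hfv, hgv⟩ :=
          IH W (by omega) (by omega) (f.restrict hfW) (g.restrict hgW) (le_trans hrank' hrank)
        refine ⟨(v : V), a', b', by simpa using hv0, ?_, ?_⟩
        · have := congrArg (Subtype.val) hfv
          simpa [LinearMap.restrict_apply] using this
        · have := congrArg (Subtype.val) hgv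
          simpa [LinearMap.restrict_apply] using this



lemma exists_triangularizing_basis
    (hyp : ∀ (V : Type) [AddCommGroup V] [Module ℂ V]
      [FiniteDimensional ℂ V], 0 < finrank ℂ V →
      ∀ f g : V →ₗ[ℂ] V,
      finrank ℂ (LinearMap.range (f ∘ₗ g - g ∘ₗ f)) ≤ 1 →
      ∃ (v : V) (a b : ℂ), v ≠ 0 ∧ f v = a • v ∧ g v = b • v) :
    ∀ (n : ℕ) (V : Type) [AddCommGroup V] [Module ℂ V]
    [FiniteDimensional ℂ V], finrank ℂ V = n →
    ∀ f g : V →ₗ[ℂ] V,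
    finrank ℂ (LinearMap.range (f ∘ₗ g - g ∘ₗ f)) ≤ 1 →
    ∃ b : Basis (Fin n) ℂ V, ∀ j : Fin n,
      f (b j) ∈ span ℂ (b '' {i | i ≤ j}) ∧ g (b j) ∈ span ℂ (b '' {i | i ≤ j}) := by
  intro n
  induction n with
  | zero =>
    intro V _ _ _ hdim f g _
    exact ⟨(Module.finBasis ℂ V).reindex (finCongr hdim), fun j => j.elim0⟩
  | succ n IH =>
    intro V _ _ _ hdim f g hrank
    obtain ⟨v, a, b, hv0, hfv, hgv⟩ := hyp V (by omega) f g hrank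
    set p : Submodule ℂ V := ℂ ∙ v with hp
    have hfp : p ≤ p.comap f := by
      rw [hp, Submodule.span_singleton_le_iff_mem, Submodule.mem_comap, hfv]
      exact Submodule.smul_mem _ _ (Submodule.mem_span_singleton_self v)
    have hgp : p ≤ p.comap g := by
      rw [hp, Submodule.span_singleton_le_iff_mem, Submodule.mem_comap, hgv]
      exact Submodule.smul_mem _ _ (Submodule.mem_span_singleton_self v)
    set f' := p.mapQ p f hfp with hf'
    set g' := p.mapQ p g hgp with hg'
    set c' := f' ∘ₗ g' - g' ∘ₗ f' with hc'
    set c := f ∘ₗ g - g ∘ₗ f with hc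
    have hcomm : c' ∘ₗ p.mkQ = p.mkQ ∘ₗ c := by
      ext x
      simp [hc', hc, hf', hg', Submodule.mapQ_apply]
    have hrank' : finrank ℂ (LinearMap.range c') ≤ 1 := by
      have h1 : LinearMap.range c' = LinearMap.range (c' ∘ₗ p.mkQ) :=
        (LinearMap.range_comp_of_range_eq_top c' p.range_mkQ).symm
      rw [h1, hcomm, LinearMap.range_comp]
      exact le_trans (Submodule.finrank_map_le _ _) hrank
    have hdimQ : finrank ℂ (V ⧸ p) = n := by
      have h1 := Submodule.finrank_quotient_add_finrank p
      have h2 : finrank ℂ p = 1 := finrank_span_singleton hv0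
      omega
    obtain ⟨bQ, hbQ⟩ := IH (V ⧸ p) hdimQ f' g' hrank'
    -- lift the basis
    set pre : Fin n → V := fun i => (Submodule.Quotient.mk_surjective p (bQ i)).choose with hpre'
    have hpre : ∀ i, p.mkQ (pre i) = bQ i := fun i =>
      (Submodule.Quotient.mk_surjective p (bQ i)).choose_spec
    set bfun : Fin (n+1) → V := Fin.cons v pre with hbfun
    have hlipre : LinearIndependent ℂ pre := by
      have : LinearIndependent ℂ (p.mkQ ∘ pre) := by
        rw [show p.mkQ ∘ pre = bQ from funext hpre]
        exact bQ.linearIndependent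
      exact LinearIndependent.of_comp p.mkQ this
    have hvnot : v ∉ span ℂ (Set.range pre) := by
      intro hmem
      rw [mem_span_range_iff_exists_fun] at hmem
      obtain ⟨cc, hcc⟩ := hmem
      have h0 : p.mkQ v = 0 := by
        rw [← LinearMap.mem_ker, Submodule.ker_mkQ]
        exact Submodule.mem_span_singleton_self v
      have h1 : ∑ i, cc i • bQ i = 0 := by
        calc ∑ i, cc i • bQ i = ∑ i, cc i • p.mkQ (pre i) := by simp [hpre]
          _ = p.mkQ (∑ i, cc i • pre i) := by rw [map_sum]; simp
          _ = 0 := by rw [hcc, h0]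
      have hz := Fintype.linearIndependent_iff.mp bQ.linearIndependent cc h1
      apply hv0
      rw [← hcc]
      simp [hz]
    have hli : LinearIndependent ℂ bfun :=
      linearIndependent_fin_cons.mpr ⟨hlipre, hvnot⟩
    have hcard : Fintype.card (Fin (n+1)) = finrank ℂ V := by simp [hdim]
    set bb := basisOfLinearIndependentOfCardEqFinrank hli hcard with hbb
    have hbbc : ⇑bb = bfun := coe_basisOfLinearIndependentOfCardEqFinrank hli hcard
    refine ⟨bb, ?_⟩
    -- flag conditions
    have key : ∀ (h : V →ₗ[ℂ] V) (h' : (V ⧸ p) →ₗ[ℂ] (V ⧸ p)),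
        (∀ x, p.mkQ (h x) = h' (p.mkQ x)) →
        (∀ j : Fin n, h' (bQ j) ∈ span ℂ (bQ '' {i | i ≤ j})) →
        (h v ∈ p) →
        ∀ j : Fin (n+1), h (bb j) ∈ span ℂ (bb '' {i | i ≤ j}) := by
      intro h h' hcomp hflag hhv j
      rw [hbbc]
      refine Fin.cases ?_ ?_ j
      · -- j = 0
        have h0 : bfun 0 = v := rfl
        rw [h0]
        have : (bfun '' {i | i ≤ 0}) = {v} := by
          ext y
          simp only [Set.mem_image, Set.mem_setOf_eq, Set.mem_singleton_iff]
          constructor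
          · rintro ⟨i, hi, rfl⟩
            have : i = 0 := le_antisymm hi (Fin.zero_le i)
            rw [this]; rfl
          · rintro rfl; exact ⟨0, le_refl _, rfl⟩
        rw [this]
        exact hhv
      · -- j = i.succ
        intro i
        have hsucc : bfun i.succ = pre i := rfl
        rw [hsucc]
        have hmk : p.mkQ (h (pre i)) ∈ span ℂ (bQ '' {k | k ≤ i}) := by
          rw [hcomp, hpre]; exact hflag i
        have him : (bQ '' {k | k ≤ i}) = p.mkQ '' (pre '' {k | k ≤ i}) := by
          rw [Set.image_image]
          apply Set.image_congr
          intro k _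
          exact (hpre k).symm
        rw [him, ← Submodule.map_span] at hmk
        have hmem : h (pre i) ∈ span ℂ (pre '' {k | k ≤ i}) ⊔ p := by
          have h2 : ((span ℂ (pre '' {k | k ≤ i})).map p.mkQ).comap p.mkQ
              = span ℂ (pre '' {k | k ≤ i}) ⊔ p := by
            rw [Submodule.comap_map_eq, Submodule.ker_mkQ]
          rw [← h2]
          exact Submodule.mem_comap.mpr hmk
        -- now span(pre '' ≤i) ⊔ p ≤ span (bfun '' ≤ i.succ)
        have hle : span ℂ (pre '' {k | k ≤ i}) ⊔ p ≤ span ℂ (bfun '' {k | k ≤ i.succ}) := by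
          apply sup_le
          · apply Submodule.span_mono
            rintro y ⟨k, hk, rfl⟩
            exact ⟨k.succ, by simpa using hk, rfl⟩
          · rw [hp, Submodule.span_singleton_le_iff_mem]
            exact Submodule.subset_span ⟨0, Fin.zero_le _, rfl⟩
        exact hle hmem
    intro j
    constructor
    · refine key f f' (fun x => (by simp [hf', Submodule.mapQ_apply])) (fun j => (hbQ j).1) ?_ j
      rw [hfv]; exact Submodule.smul_mem _ _ (Submodule.mem_span_singleton_self v)
    · refine key g g' (fun x => (by simp [hg', Submodule.mapQ_apply])) (fun j => (hbQ j).2) ?_ j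
      rw [hgv]; exact Submodule.smul_mem _ _ (Submodule.mem_span_singleton_self v)

/-- If `A, B` are `n × n` complex matrices whose commutator `AB − BA` has rank at most `1`,
then `A` and `B` are simultaneously triangularizable: there is an invertible matrix `P` such
that `P⁻¹AP` and `P⁻¹BP` are both upper triangular. -/
theorem simultaneously_triangularizable_of_rank_comm_le_one
    (n : ℕ) (A B : Matrix (Fin n) (Fin n) ℂ)
    (h : Matrix.rank (A * B - B * A) ≤ 1) :
    ∃ P : (Matrix (Fin n) (Fin n) ℂ)ˣ,
      (((P⁻¹ : (Matrix (Fin n) (Fin n) ℂ)ˣ) : Matrix (Fin n) (Fin n) ℂ) * A * (P : Matrix (Fin n) (Fin n) ℂ)).BlockTriangular id ∧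
      (((P⁻¹ : (Matrix (Fin n) (Fin n) ℂ)ˣ) : Matrix (Fin n) (Fin n) ℂ) * B * (P : Matrix (Fin n) (Fin n) ℂ)).BlockTriangular id := by
  set f := A.mulVecLin with hf
  set g := B.mulVecLin with hg
  have hsub : (A * B - B * A).mulVecLin = f ∘ₗ g - g ∘ₗ f := by
    ext x
    simp [hf, hg, Matrix.mulVecLin_apply, Matrix.sub_mulVec, Matrix.mulVec_mulVec]
  have hrank : finrank ℂ (LinearMap.range (f ∘ₗ g - g ∘ₗ f)) ≤ 1 := by
    rw [← hsub]; exact h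
  have hdim : finrank ℂ (Fin n → ℂ) = n := by simp
  obtain ⟨bb, hbb⟩ := exists_triangularizing_basis (fun V _ _ _ hpos => exists_common_eigenvector (finrank ℂ V) V le_rfl hpos) n (Fin n → ℂ) hdim f g hrank
  set e : Basis (Fin n) ℂ (Fin n → ℂ) := Pi.basisFun ℂ (Fin n) with he
  set Pm := e.toMatrix ⇑bb with hPm
  set Qm := bb.toMatrix ⇑e with hQm
  have hPQ : Pm * Qm = 1 := Basis.toMatrix_mul_toMatrix_flip e bb
  have hQP : Qm * Pm = 1 := Basis.toMatrix_mul_toMatrix_flip bb e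
  have main : ∀ (M : Matrix (Fin n) (Fin n) ℂ),
      (∀ j, M.mulVecLin (bb j) ∈ span ℂ (⇑bb '' {i | i ≤ j})) →
      (Qm * M * Pm).BlockTriangular id := by
    intro M hM
    have h1 : LinearMap.toMatrix e e M.mulVecLin = M := by
      have h2 : Matrix.toLin' M = M.mulVecLin := LinearMap.ext fun v => rfl
      rw [he, LinearMap.toMatrix_eq_toMatrix', ← h2, LinearMap.toMatrix'_toLin']
    have hM' : Qm * M * Pm = LinearMap.toMatrix bb bb M.mulVecLin := by
      conv_lhs => rw [← h1]
      rw [hQm, hPm]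
      exact basis_toMatrix_mul_linearMap_toMatrix_mul_basis_toMatrix bb e bb e M.mulVecLin
    intro i j hij
    rw [hM', LinearMap.toMatrix_apply]
    have hsupp := (Basis.mem_span_image bb).mp (hM j)
    have : i ∉ (bb.repr (M.mulVecLin (bb j))).support := by
      intro hmem
      exact absurd (hsupp hmem) (by simpa using hij)
    simpa using Finsupp.notMem_support_iff.mp this
  exact ⟨⟨Pm, Qm, hPQ, hQP⟩, main A (fun j => (hbb j).1), main B (fun j => (hbb j).2)⟩
end
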